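/- arXiv:1104.3173 — 9 statements merged into one kernel-verified Lean document; each statement's English description precedes it below -/
import Mathlib

section
/- Let $R$ be a ring and $\kappa$ an infinite regular cardinal such that every left ideal of $R$ can be generated by fewer than $\kappa$ elements. If $(M_i)_{i\in I}$ is a family of injective left $R$-modules, then the submodule of $\prod_{i\in I} M_i$ consisting of elements whose support has cardinality less than $\kappa$ is an injective $R$-module. -/
universe u

open Cardinal

/-- The `κ`-restricted direct product `∏^κ_I M_i`: the submodule of `∏_I M_i`
consisting of elements whose support has cardinality `< κ`. -/
def restrictedProd (R : Type u) [Ring R] {I : Type u} (M : I → Type u)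
    [∀ i, AddCommGroup (M i)] [∀ i, Module R (M i)]
    (κ : Cardinal.{u}) (hκ : ℵ₀ ≤ κ) : Submodule R (∀ i, M i) where
  carrier := {x | #{i | x i ≠ 0} < κ}
  zero_mem' := by
    have : {i | (0 : ∀ i, M i) i ≠ 0} = (∅ : Set I) := by
      ext i; simp
    simp only [Set.mem_setOf_eq, this, Cardinal.mk_emptyCollection]
    exact lt_of_lt_of_le (by exact_mod_cast aleph0_pos) hκ
  add_mem' := by
    intro x y hx hy
    refine lt_of_le_of_lt (le_trans (Cardinal.mk_le_mk_of_subset ?_)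
      (Cardinal.mk_union_le _ _)) (Cardinal.add_lt_of_lt hκ hx hy)
    intro i hi
    by_contra h
    simp only [Set.mem_union, Set.mem_setOf_eq, not_or, not_not] at h
    exact hi (by simp [Pi.add_apply, h.1, h.2])
  smul_mem' := by
    intro c x hx
    refine lt_of_le_of_lt (Cardinal.mk_le_mk_of_subset ?_) hx
    intro i hi
    by_contra h
    simp only [Set.mem_setOf_eq, not_not] at h
    exact hi (by simp [Pi.smul_apply, h])

/-- If `R` is a ring and `κ` an infinite regular cardinal such that every left ideal
of `R` is generated by fewer than `κ` elements, then the `κ`-restricted product of any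
family of injective left `R`-modules is injective. -/
theorem restrictedProd_injective (R : Type u) [Ring R] (κ : Cardinal.{u})
    (hreg : κ.IsRegular)
    (hideal : ∀ L : Ideal R, ∃ s : Set R, #s < κ ∧ Ideal.span s = L)
    (I : Type u) (M : I → Type u) [∀ i, AddCommGroup (M i)] [∀ i, Module R (M i)]
    (hinj : ∀ i, Module.Injective R (M i)) :
    Module.Injective R (restrictedProd R M κ hreg.aleph0_le) := by
  set P := restrictedProd R M κ hreg.aleph0_le with hP
  apply Module.Baer.injective
  intro L f
  obtain ⟨s, hs, hspan⟩ := hideal L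
  have baer : ∀ i, Module.Baer R (M i) := fun i => Module.Baer.of_injective (hinj i)
  -- component maps
  let φ : ∀ i, L →ₗ[R] M i := fun i => LinearMap.proj i ∘ₗ P.subtype ∘ₗ f
  have hmem : ∀ a : R, a ∈ s → a ∈ L := fun a ha => hspan ▸ Ideal.subset_span ha
  -- the union of the supports of images of generators
  let S : Set I := ⋃ a : s, {i | (f ⟨a.1, hmem a.1 a.2⟩ : ∀ j, M j) i ≠ 0}
  have hS : #S < κ := by
    refine lt_of_le_of_lt Cardinal.mk_iUnion_le_sum_mk
      (Cardinal.sum_lt_of_isRegular hreg hs fun a => ?_)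
    exact (f ⟨a.1, hmem a.1 a.2⟩).2
  have hφ : ∀ i, i ∉ S → φ i = 0 := by
    intro i hi
    ext x
    have hle : Ideal.span s ≤ (LinearMap.ker (φ i)).map L.subtype := by
      rw [Ideal.span_le]
      intro a ha
      refine ⟨⟨a, hmem a ha⟩, ?_, rfl⟩
      have : i ∉ {j | (f ⟨a, hmem a ha⟩ : ∀ j, M j) j ≠ 0} := fun h =>
        hi (Set.mem_iUnion.2 ⟨⟨a, ha⟩, h⟩)
      simpa [φ, LinearMap.mem_ker] using not_not.1 this
    rw [hspan] at hle
    obtain ⟨y, hy, hyx⟩ := hle x.2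
    have : y = x := Subtype.ext hyx
    rw [← this]
    simpa using hy
  have hext : ∀ i, ∃ g : R →ₗ[R] M i,
      (∀ x (hx : x ∈ L), g x = φ i ⟨x, hx⟩) ∧ (i ∉ S → g = 0) := by
    intro i
    by_cases hi : i ∈ S
    · obtain ⟨g, hg⟩ := baer i L (φ i)
      exact ⟨g, fun x hx => hg x hx, fun h => absurd hi h⟩
    · refine ⟨0, fun x hx => ?_, fun _ => rfl⟩
      rw [hφ i hi]; rfl
  choose e he1 he2 using hext
  have hmemP : ∀ r : R, (LinearMap.pi e) r ∈ P := by
    intro r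
    refine lt_of_le_of_lt (Cardinal.mk_le_mk_of_subset (fun i hi => ?_)) hS
    by_contra h
    exact hi (by simp [he2 i h])
  refine ⟨(LinearMap.pi e).codRestrict P hmemP, fun x hx => ?_⟩
  apply Subtype.ext
  funext i
  simpa [φ] using he1 i x hx
end

section
/- Let $R$ be a ring and $A$ a left $R$-module. Then there exist an injective $R$-module $P$, a downward directed family $(P_D)$ of injective submodules of $P$, and an isomorphism of $A$ with the intersection $\bigcap_D P_D$. Equivalently, $A$ is the inverse limit of a directed system of injective modules with injective (one-to-one) transition maps. -/
universe u

open Cardinal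

noncomputable section

namespace Bergman

open scoped Classical

variable {R : Type u} [Ring R]

theorem inj_of_equiv {M N : Type u} [AddCommGroup M] [Module R M] [AddCommGroup N] [Module R N]
    (e : M ≃ₗ[R] N) (hM : Module.Injective R M) : Module.Injective R N where
  out X Y _ _ _ _ f hf g := by
    obtain ⟨h', hh⟩ := hM.out f hf (e.symm.toLinearMap ∘ₗ g)
    refine ⟨e.toLinearMap ∘ₗ h', fun x => ?_⟩
    simp [hh x]

theorem inj_prod {M N : Type u} [AddCommGroup M] [Module R M] [AddCommGroup N] [Module R N]
    (hM : Module.Injective R M) (hN : Module.Injective R N) : Module.Injective R (M × N) where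
  out X Y _ _ _ _ f hf g := by
    obtain ⟨h1, hh1⟩ := hM.out f hf ((LinearMap.fst R M N) ∘ₗ g)
    obtain ⟨h2, hh2⟩ := hN.out f hf ((LinearMap.snd R M N) ∘ₗ g)
    refine ⟨h1.prod h2, fun x => ?_⟩
    have e1 := hh1 x
    have e2 := hh2 x
    simp only [LinearMap.comp_apply, LinearMap.fst_apply, LinearMap.snd_apply] at e1 e2
    simp [LinearMap.prod_apply, e1, e2]

theorem exists_emb (M : Type u) [AddCommGroup M] [Module R M] :
    ∃ (Q : Type u) (_ : AddCommGroup Q) (_ : Module R Q),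
      ∃ (i : M →ₗ[R] Q), Module.Injective R Q ∧ Function.Injective i := by
  let Mc := ModuleCat.of R M
  let Q := CategoryTheory.Injective.under Mc
  refine ⟨↥Q, inferInstance, inferInstance, (CategoryTheory.Injective.ι Mc).hom, ?_, ?_⟩
  · haveI : CategoryTheory.Injective (ModuleCat.of R ↥Q) :=
      CategoryTheory.Injective.injective_under Mc
    exact Module.injective_module_of_injective_object R ↥Q
  · exact (ModuleCat.mono_iff_injective (CategoryTheory.Injective.ι Mc)).mp inferInstance

/-- the index type -/
abbrev Lam (R : Type u) [Ring R] : Type u := Finset (Set (List R))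

variable (R) (E : Type u) [AddCommGroup E] [Module R E]

/-- submodule of functions with small support vanishing strictly below `α` -/
def Dsub (α : Lam R) : Submodule R (Lam R → E) where
  carrier := {x | #{i | x i ≠ 0} ≤ #(List R) ∧ ∀ j, j ⊂ α → x j = 0}
  add_mem' := by
    rintro x y ⟨hx1, hx2⟩ ⟨hy1, hy2⟩
    constructor
    · have hsub : {i | (x + y) i ≠ 0} ⊆ {i | x i ≠ 0} ∪ {i | y i ≠ 0} := by
        intro i hi
        by_contra hc
        simp only [Set.mem_union, Set.mem_setOf_eq, not_or, not_not] at hc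
        exact hi (by simp [hc.1, hc.2])
      calc #{i | (x + y) i ≠ 0} ≤ #({i | x i ≠ 0} ∪ {i | y i ≠ 0} : Set _) :=
            mk_le_mk_of_subset hsub
        _ ≤ #{i | x i ≠ 0} + #{i | y i ≠ 0} := mk_union_le _ _
        _ ≤ #(List R) + #(List R) := add_le_add hx1 hy1
        _ = #(List R) := by
            haveI : Nonempty R := ⟨0⟩
            exact add_eq_self (aleph0_le_mk (List R))
    · intro j hj
      simp [hx2 j hj, hy2 j hj]
  zero_mem' := by
    constructor
    · simp
    · intro j _; rfl
  smul_mem' := by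
    rintro c x ⟨hx1, hx2⟩
    constructor
    · refine le_trans (mk_le_mk_of_subset ?_) hx1
      intro i hi
      simp only [Set.mem_setOf_eq] at hi ⊢
      intro h0
      exact hi (by simp [h0])
    · intro j hj
      simp [hx2 j hj]

theorem mem_Dsub {α : Lam R} {x : Lam R → E} :
    x ∈ Dsub R E α ↔ #{i | x i ≠ 0} ≤ #(List R) ∧ ∀ j, j ⊂ α → x j = 0 := Iff.rfl

theorem Dsub_anti {α β : Lam R} (h : α ⊆ β) : Dsub R E β ≤ Dsub R E α := by
  rintro x ⟨h1, h2⟩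
  exact ⟨h1, fun j hj => h2 j (ssubset_of_ssubset_of_subset hj h)⟩

theorem baer_Dsub (hE : Module.Injective R E) (α : Lam R) : Module.Baer R ↥(Dsub R E α) := by
  classical
  intro I g
  haveI : Nonempty R := ⟨0⟩
  haveI : Nonempty ↥I := ⟨0⟩
  set gc : Lam R → (↥I →ₗ[R] E) :=
    fun i => (LinearMap.proj i) ∘ₗ (Dsub R E α).subtype ∘ₗ g with hgc
  have hx : ∀ (i : Lam R), gc i ≠ 0 → ∃ h : R →ₗ[R] E, ∀ x : ↥I, h (x : R) = gc i x := by
    intro i _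
    obtain ⟨h, hh⟩ := hE.out I.subtype (Submodule.injective_subtype I) (gc i)
    exact ⟨h, fun x => hh x⟩
  choose hext hprop using hx
  let h : Lam R → (R →ₗ[R] E) := fun i => if hi : gc i ≠ 0 then hext i hi else 0
  have hmem : ∀ r : R, (fun i => h i r) ∈ Dsub R E α := by
    intro r
    constructor
    · have hsub : {i | h i r ≠ 0} ⊆ ⋃ (x : ↥I), {i | ((g x : Lam R → E) i) ≠ 0} := by
        intro i hi
        simp only [Set.mem_setOf_eq, h] at hi
        by_cases hgi : gc i ≠ 0
        · have hex : ∃ x : ↥I, ((g x : Lam R → E) i) ≠ 0 := by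
            by_contra hc
            push_neg at hc
            exact hgi (LinearMap.ext fun x => by simpa [hgc] using hc x)
          obtain ⟨x, hxne⟩ := hex
          exact Set.mem_iUnion.2 ⟨x, hxne⟩
        · simp [hgi] at hi
      refine le_trans (mk_le_mk_of_subset hsub) ?_
      refine le_trans (mk_iUnion_le _) ?_
      have h1 : #↥I ≤ #(List R) := by
        refine le_trans (mk_subtype_le _) ?_
        exact mk_le_of_injective (f := fun r : R => [r]) (by intro a b hab; simpa using hab)
      have h2 : ⨆ (x : ↥I), #{i | ((g x : Lam R → E) i) ≠ 0} ≤ #(List R) :=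
        ciSup_le' fun x => (g x).2.1
      calc #↥I * ⨆ (x : ↥I), #{i | ((g x : Lam R → E) i) ≠ 0}
          ≤ #(List R) * #(List R) := mul_le_mul' h1 h2
        _ = #(List R) := mul_eq_self (aleph0_le_mk (List R))
    · intro j hj
      have : gc j = 0 := by
        apply LinearMap.ext
        intro x
        simpa [hgc] using (g x).2.2 j hj
      simp [h, this]
  refine ⟨LinearMap.codRestrict (Dsub R E α) (LinearMap.pi h) hmem, ?_⟩
  intro x hx'
  apply Subtype.ext
  funext i
  show h i x = (g ⟨x, hx'⟩ : Lam R → E) i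
  by_cases hgi : gc i ≠ 0
  · rw [show h i = hext i hgi from dif_pos hgi]; exact hprop i hgi ⟨x, hx'⟩
  · push_neg at hgi
    have := congrFun (congrArg (DFunLike.coe) hgi) ⟨x, hx'⟩
    simp only [LinearMap.zero_apply] at this
    simp [h, hgi]
    simpa [hgc] using this.symm

/-- the partial diagonal map -/
def dg (α : Lam R) : E →ₗ[R] (Lam R → E) :=
  LinearMap.pi (fun i => if i ⊂ α then (LinearMap.id : E →ₗ[R] E) else 0)

theorem dg_apply (α : Lam R) (b : E) (i : Lam R) :
    dg R E α b i = if i ⊂ α then b else 0 := by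
  simp only [dg, LinearMap.pi_apply]
  split_ifs <;> simp

theorem dg_mem (α β : Lam R) (b : E) (h : ∀ j, j ⊂ β → j ⊂ α → False) :
    dg R E α b ∈ Dsub R E β := by
  constructor
  · haveI : Nonempty R := ⟨0⟩
    have hsub : {i | dg R E α b i ≠ 0} ⊆ ↑α.powerset := by
      intro i hi
      simp only [Set.mem_setOf_eq, dg_apply] at hi
      rw [Finset.coe_powerset]
      by_cases hss : i ⊂ α
      · exact Set.mem_setOf_eq ▸ (by simpa using hss.subset)
      · simp [hss] at hi
    refine le_trans (mk_le_mk_of_subset hsub) ?_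
    refine le_trans (le_of_lt (Set.Finite.lt_aleph0 (Finset.finite_toSet _))) ?_
    exact aleph0_le_mk (List R)
  · intro j hj
    rw [dg_apply]
    split_ifs with hss
    · exact absurd hss (fun hss => h j hj hss)
    · rfl

theorem dg_sub_mem (α β : Lam R) (hab : α ⊆ β) (b : E) :
    dg R E β b - dg R E α b ∈ Dsub R E α := by
  constructor
  · haveI : Nonempty R := ⟨0⟩
    have hsub : {i | (dg R E β b - dg R E α b) i ≠ 0} ⊆ ↑β.powerset := by
      intro i hi
      simp only [Set.mem_setOf_eq, Pi.sub_apply, dg_apply] at hi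
      rw [Finset.coe_powerset]
      by_cases hss : i ⊂ β
      · simpa using hss.subset
      · have : ¬ i ⊂ α := fun hc => hss (ssubset_of_ssubset_of_subset hc hab)
        simp [hss, this] at hi
    refine le_trans (mk_le_mk_of_subset hsub) ?_
    exact le_trans (le_of_lt (Set.Finite.lt_aleph0 (Finset.finite_toSet _))) (aleph0_le_mk (List R))
  · intro j hj
    have h1 : j ⊂ β := ssubset_of_ssubset_of_subset hj hab
    simp [Pi.sub_apply, dg_apply, h1, hj]

end Bergman

end

open Bergman Cardinal

/-- Every left `R`-module `A` can be written as the intersection of a downward directed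
family of injective submodules of an injective module; equivalently, as the inverse limit
of a system of injective modules and one-to-one homomorphisms. -/
theorem module_eq_inter_of_injectives (R : Type u) [Ring R]
    (A : Type u) [AddCommGroup A] [Module R A] :
    ∃ (P : ModuleCat.{u} R), Module.Injective R P ∧
      ∃ (ι : Type u) (S : ι → Submodule R P),
        Nonempty ι ∧
        (∀ i, Module.Injective R (S i)) ∧
        (∀ i j : ι, ∃ k : ι, S k ≤ S i ⊓ S j) ∧
        Nonempty (A ≃ₗ[R] ↥(⨅ i, S i)) := by
  classical
  haveI : Nonempty R := ⟨0⟩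
  -- embed A into an injective Q
  obtain ⟨Q, _, _, iA, hQinj, hiA⟩ := exists_emb (R := R) A
  -- embed Q / A into an injective E
  obtain ⟨E, _, _, iE, hEinj, hiE⟩ := exists_emb (R := R) (Q ⧸ LinearMap.range iA)
  set f : Q →ₗ[R] E := iE ∘ₗ (LinearMap.range iA).mkQ with hf
  have hker : LinearMap.ker f = LinearMap.range iA := by
    rw [hf, LinearMap.ker_comp, LinearMap.ker_eq_bot.mpr hiE, Submodule.comap_bot,
      Submodule.ker_mkQ]
  -- ambient module
  set B : Submodule R (Lam R → E) := Dsub R E ∅ with hB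
  set PM : Type u := Q × ↥B with hPM
  -- the test maps
  set L : Lam R → (PM →ₗ[R] (Lam R → E)) := fun α =>
    (B.subtype ∘ₗ LinearMap.snd R Q ↥B) - ((dg R E α) ∘ₗ f ∘ₗ LinearMap.fst R Q ↥B) with hL
  have hLap : ∀ (α : Lam R) (p : PM), L α p = (p.2 : Lam R → E) - dg R E α (f p.1) := by
    intro α p; rfl
  -- the submodules
  set S : Lam R → Submodule R PM := fun α => (Dsub R E α).comap (L α) with hS
  refine ⟨ModuleCat.of R PM, ?_, Lam R, S, ⟨∅⟩, ?_, ?_, ?_⟩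
  · -- ambient injectivity
    exact inj_prod hQinj ((baer_Dsub R E hEinj ∅).injective)
  · -- injectivity of each S α
    intro α
    have hmemB : ∀ (p : Q × ↥(Dsub R E α)), dg R E α (f p.1) + (p.2 : Lam R → E) ∈ B := by
      intro p
      refine B.add_mem ?_ (Dsub_anti R E (Finset.empty_subset α) p.2.2)
      exact dg_mem R E α ∅ (f p.1) (fun j hj _ => by simp at hj)
    set T1 : (Q × ↥(Dsub R E α)) →ₗ[R] PM :=
      (LinearMap.fst R Q ↥(Dsub R E α)).prod
        (LinearMap.codRestrict B
          ((dg R E α) ∘ₗ f ∘ₗ (LinearMap.fst R Q ↥(Dsub R E α)) +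
            (Dsub R E α).subtype ∘ₗ (LinearMap.snd R Q ↥(Dsub R E α)))
          (fun p => by simpa using hmemB p)) with hT1
    have hT1mem : ∀ p, T1 p ∈ S α := by
      intro p
      simp only [hS, Submodule.mem_comap]
      have : L α (T1 p) = (p.2 : Lam R → E) := by
        rw [hLap]
        show (dg R E α (f p.1) + (p.2 : Lam R → E)) - dg R E α (f ((T1 p).1)) = _
        have h1 : (T1 p).1 = p.1 := rfl
        rw [h1]
        abel
      rw [this]
      exact p.2.2
    set T : (Q × ↥(Dsub R E α)) →ₗ[R] ↥(S α) := LinearMap.codRestrict (S α) T1 hT1mem with hT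
    set T2 : ↥(S α) →ₗ[R] (Q × ↥(Dsub R E α)) :=
      ((LinearMap.fst R Q ↥B) ∘ₗ (S α).subtype).prod
        (LinearMap.codRestrict (Dsub R E α) ((L α) ∘ₗ (S α).subtype) (fun p => p.2)) with hT2
    have hTT2 : T ∘ₗ T2 = LinearMap.id := by
      apply LinearMap.ext
      intro p
      apply Subtype.ext
      apply Prod.ext
      · rfl
      · apply Subtype.ext
        show dg R E α (f (p : PM).1) + (L α (p : PM)) = ((p : PM).2 : Lam R → E)
        rw [hLap]
        abel
    have hT2T : T2 ∘ₗ T = LinearMap.id := by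
      apply LinearMap.ext
      intro p
      apply Prod.ext
      · rfl
      · apply Subtype.ext
        show L α (T1 p) = (p.2 : Lam R → E)
        rw [hLap]
        show (dg R E α (f p.1) + (p.2 : Lam R → E)) - dg R E α (f ((T1 p).1)) = _
        have h1 : (T1 p).1 = p.1 := rfl
        rw [h1]
        abel
    have e : (Q × ↥(Dsub R E α)) ≃ₗ[R] ↥(S α) := LinearEquiv.ofLinear T T2 hTT2 hT2T
    exact inj_of_equiv e (inj_prod hQinj ((baer_Dsub R E hEinj α).injective))
  · -- directedness
    intro α β
    refine ⟨α ∪ β, ?_⟩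
    have key : ∀ (γ δ : Lam R), γ ⊆ δ → S δ ≤ S γ := by
      intro γ δ hγδ p hp
      simp only [hS, Submodule.mem_comap] at hp ⊢
      have : L γ p = L δ p + (dg R E δ (f p.1) - dg R E γ (f p.1)) := by
        rw [hLap, hLap]; abel
      rw [this]
      exact (Dsub R E γ).add_mem (Dsub_anti R E hγδ hp) (dg_sub_mem R E γ δ hγδ (f p.1))
    exact le_inf (key α (α ∪ β) Finset.subset_union_left)
      (key β (α ∪ β) Finset.subset_union_right)
  · -- the intersection is A
    haveI : Infinite (Set (List R)) :=
      Infinite.of_injective (fun l : List R => ({l} : Set (List R))) (fun a b h => by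
        simpa using h)
    have hmem0 : ∀ a : A, (iA a, (0 : ↥B)) ∈ ⨅ (α : Lam R), S α := by
      intro a
      rw [Submodule.mem_iInf]
      intro α
      simp only [hS, Submodule.mem_comap]
      have hfa : f (iA a) = 0 := by
        have : iA a ∈ LinearMap.ker f := hker ▸ ⟨a, rfl⟩
        simpa using this
      have : L α (iA a, (0 : ↥B)) = 0 := by
        rw [hLap]
        simp [hfa]
      rw [this]
      exact (Dsub R E α).zero_mem
    set ψ : A →ₗ[R] ↥(⨅ (α : Lam R), S α) :=
      LinearMap.codRestrict _ ((iA).prod 0) (fun a => hmem0 a) with hψ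
    have hbij : Function.Bijective ψ := by
      constructor
      · intro a b hab
        have : iA a = iA b := congrArg (fun p => (p : PM).1) (congrArg Subtype.val hab)
        exact hiA this
      · rintro ⟨⟨q, x⟩, hqx⟩
        rw [Submodule.mem_iInf] at hqx
        -- every coordinate of x equals f q
        have hcoord : ∀ i : Lam R, (x : Lam R → E) i = f q := by
          intro i
          obtain ⟨t, ht⟩ := Finset.exists_notMem i
          have h1 := hqx (insert t i)
          simp only [hS, Submodule.mem_comap] at h1
          have h2 := h1.2 i (Finset.ssubset_insert ht)
          rw [hLap] at h2
          simp only [Pi.sub_apply, dg_apply] at h2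
          rw [if_pos (Finset.ssubset_insert ht)] at h2
          exact sub_eq_zero.mp h2
        -- f q must be zero
        have hfq : f q = 0 := by
          by_contra hne
          have hall : {i : Lam R | (x : Lam R → E) i ≠ 0} = Set.univ := by
            ext i
            simp only [Set.mem_setOf_eq, Set.mem_univ, iff_true]
            rw [hcoord i]
            exact hne
          have hsmall := x.2.1
          rw [hall] at hsmall
          rw [mk_univ] at hsmall
          have hbig : #(List R) < #(Lam R) := by
            calc #(List R) < (2 : Cardinal) ^ #(List R) := cantor _
              _ = #(Set (List R)) := (mk_set).symm
              _ ≤ #(Lam R) := mk_le_of_injective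
                  (f := fun s : Set (List R) => ({s} : Finset (Set (List R))))
                  (fun a b h => by simpa using h)
          exact absurd hsmall (not_le.mpr hbig)
        have hx0 : x = 0 := by
          apply Subtype.ext
          funext i
          rw [hcoord i, hfq]
          rfl
        have hq : q ∈ LinearMap.range iA := by
          rw [← hker]
          simpa using hfq
        obtain ⟨a, ha⟩ := hq
        refine ⟨a, ?_⟩
        apply Subtype.ext
        show (iA a, (0 : ↥B)) = (q, x)
        rw [ha, hx0]
    exact ⟨LinearEquiv.ofBijective ψ hbij⟩
end

section
/- Let $R$ be a left Noetherian ring and $A$ a left $R$-module. Then $A$ can be written as the inverse limit of an inverse system indexed by the first uncountable ordinal $\omega_1$ in which all modules are injective left $R$-modules and all transition maps are surjective. -/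
universe u v

/-- The first uncountable ordinal `ω₁`, as a linearly ordered index type. -/
def Omega1 : Type 1 := {o : Ordinal.{0} // o < (Cardinal.aleph 1).ord}

noncomputable instance : LinearOrder Omega1 := by unfold Omega1; infer_instance

namespace Omega1
noncomputable section
open Cardinal Ordinal
def ord (a : Omega1) : Ordinal.{0} := Subtype.val a
lemma ord_lt (a : Omega1) : a.ord < (Cardinal.aleph 1).ord := a.2
lemma ord_le {a b : Omega1} (h : a ≤ b) : a.ord ≤ b.ord := h
lemma isLimitW : Order.IsSuccLimit ((Cardinal.aleph 1).ord) :=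
  Cardinal.isSuccLimit_ord (Cardinal.aleph0_le_aleph 1)
def succ (a : Omega1) : Omega1 := ⟨Order.succ a.ord, isLimitW.succ_lt a.2⟩

lemma self_lt_succ (a : Omega1) : a < succ a := Order.lt_succ a.ord

lemma succ_le_of_lt {x c : Omega1} (h : x < c) : succ x ≤ c :=
  (Order.succ_le_of_lt (h : x.ord < c.ord) : Order.succ x.ord ≤ c.ord)
instance : Nonempty Omega1 := ⟨⟨0, isLimitW.pos⟩⟩

def tau (a : Omega1) : Type := a.ord.ToType

instance (a : Omega1) : Countable (tau a) := by
  have h1 : #(tau a) = a.ord.card := Cardinal.mk_toType a.ord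
  have h2 : a.ord.card < Cardinal.aleph 1 := Cardinal.lt_ord.mp a.2
  rw [← Cardinal.succ_aleph0, Order.lt_succ_iff] at h2
  exact Cardinal.mk_le_aleph0_iff.mp (h1 ▸ h2)

def mid {a b : Omega1} (h : a ≤ b) (x : Set.Iio a.ord) : Set.Iio b.ord :=
  ⟨x.1, Set.mem_Iio.mpr (lt_of_lt_of_le (Set.mem_Iio.mp x.2) (ord_le h))⟩

def emb {a b : Omega1} (h : a ≤ b) (x : tau a) : tau b :=
  (Ordinal.ToType.mk (o := b.ord)) (mid h (((Ordinal.ToType.mk (o := a.ord))).symm x))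

lemma mid_refl (a : Omega1) (x : Set.Iio a.ord) : mid (le_refl a) x = x := rfl

lemma mid_trans {a b c : Omega1} (hab : a ≤ b) (hbc : b ≤ c) (x : Set.Iio a.ord) :
    mid hbc (mid hab x) = mid (hab.trans hbc) x := rfl

lemma emb_refl (a : Omega1) (x : tau a) : emb (le_refl a) x = x := by
  unfold emb
  rw [mid_refl]; exact ((Ordinal.ToType.mk (o := a.ord))).apply_symm_apply x

lemma emb_trans {a b c : Omega1} (hab : a ≤ b) (hbc : b ≤ c) (x : tau a) :
    emb hbc (emb hab x) = emb (hab.trans hbc) x := by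
  unfold emb
  rw [((Ordinal.ToType.mk (o := b.ord))).symm_apply_apply, mid_trans]

lemma emb_inj {a b : Omega1} (h : a ≤ b) : Function.Injective (emb h) := by
  intro x y hxy
  unfold emb at hxy
  have h1 := ((Ordinal.ToType.mk (o := b.ord))).injective hxy
  have h2 : (((Ordinal.ToType.mk (o := a.ord))).symm x) = (((Ordinal.ToType.mk (o := a.ord))).symm y) :=
    Subtype.ext (Subtype.mk_eq_mk.mp h1)
  exact ((Ordinal.ToType.mk (o := a.ord))).symm.injective h2

/-- the coordinate sets: coinfinite injections of the initial segment into ℕ. -/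
def Fset (a : Omega1) : Type :=
  {f : tau a → ℕ // Function.Injective f ∧ (Set.range f)ᶜ.Infinite}

def rmap {a b : Omega1} (h : a ≤ b) (f : Fset b) : Fset a :=
  ⟨f.1 ∘ emb h, f.2.1.comp (emb_inj h),
    f.2.2.mono (Set.compl_subset_compl.mpr (Set.range_comp_subset_range _ _))⟩

lemma rmap_refl (a : Omega1) (f : Fset a) : rmap (le_refl a) f = f := by
  apply Subtype.ext; funext x; exact congrArg f.1 (emb_refl a x)

lemma rmap_trans {a b c : Omega1} (hab : a ≤ b) (hbc : b ≤ c) (f : Fset c) :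
    rmap hab (rmap hbc f) = rmap (hab.trans hbc) f := by
  apply Subtype.ext; funext x
  exact congrArg f.1 (emb_trans hab hbc x)

lemma infinite_compl_of_even {α : Type*} (g : α → ℕ) (hg : ∀ x, Even (g x)) :
    (Set.range g)ᶜ.Infinite :=
  Set.infinite_of_injective_forall_mem (f := fun n : ℕ => 2 * n + 1)
    (hi := fun n m h => by simp only [] at h; omega)
    (hf := fun n => by
      simp only [Set.mem_compl_iff, Set.mem_range, not_exists]
      intro x hx
      rcases hg x with ⟨k, hk⟩
      omega)

instance Fset_nonempty (a : Omega1) : Nonempty (Fset a) := by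
  obtain ⟨cnt, hcnt⟩ := exists_injective_nat (tau a)
  refine ⟨⟨fun x => 2 * cnt x, fun x y h => hcnt (by simp only [] at h; omega), ?_⟩⟩
  exact infinite_compl_of_even (fun x => 2 * cnt x) (fun x => by simpa using even_two_mul (cnt x))

lemma rmap_surjective {a b : Omega1} (h : a ≤ b) : Function.Surjective (rmap h) := by
  intro f
  obtain ⟨cnt, hcnt⟩ := exists_injective_nat (tau b)
  set S : Set ℕ := (Set.range f.1)ᶜ with hS
  have hSinf : S.Infinite := f.2.2
  let em : ℕ ↪ S := hSinf.natEmbedding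
  classical
  let g : tau b → ℕ := fun y =>
    if hy : ∃ x, emb h x = y then f.1 hy.choose else (em (2 * cnt y + 1)).1
  have hg1 : ∀ x : tau a, g (emb h x) = f.1 x := by
    intro x
    have hy : ∃ x', emb h x' = emb h x := ⟨x, rfl⟩
    have : hy.choose = x := emb_inj h hy.choose_spec
    simp only [g, dif_pos hy, this]
  have hemS : ∀ n, ((em n : S) : ℕ) ∈ S := fun n => (em n).2
  have hginj : Function.Injective g := by
    intro x y hxy
    by_cases hx : ∃ x', emb h x' = x <;> by_cases hy : ∃ y', emb h y' = y
    · obtain ⟨x', rfl⟩ := hx; obtain ⟨y', rfl⟩ := hy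
      rw [hg1, hg1] at hxy
      exact congrArg (emb h) (f.2.1 hxy)
    · exfalso
      rw [show g x = f.1 (Exists.choose hx) from dif_pos hx,
        show g y = (em (2 * cnt y + 1)).1 from dif_neg hy] at hxy
      exact (hemS (2 * cnt y + 1)) (by rw [← hxy]; exact Set.mem_range_self _)
    · exfalso
      rw [show g y = f.1 (Exists.choose hy) from dif_pos hy,
        show g x = (em (2 * cnt x + 1)).1 from dif_neg hx] at hxy
      exact (hemS (2 * cnt x + 1)) (by rw [hxy]; exact Set.mem_range_self _)
    · rw [show g x = (em (2 * cnt x + 1)).1 from dif_neg hx,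
        show g y = (em (2 * cnt y + 1)).1 from dif_neg hy] at hxy
      have := em.injective (Subtype.ext hxy)
      exact hcnt (by omega)
  have hgcoinf : (Set.range g)ᶜ.Infinite := by
    apply Set.infinite_of_injective_forall_mem
      (f := fun n : ℕ => ((em (2 * n) : S) : ℕ))
    · intro n m hnm
      have := em.injective (Subtype.ext hnm)
      omega
    · intro n
      simp only [Set.mem_compl_iff, Set.mem_range, not_exists]
      intro y hy
      by_cases hyy : ∃ x', emb h x' = y
      · rw [show g y = f.1 (Exists.choose hyy) from dif_pos hyy] at hy
        exact (hemS (2 * n)) (by rw [← hy]; exact Set.mem_range_self _)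
      · rw [show g y = (em (2 * cnt y + 1)).1 from dif_neg hyy] at hy
        have := em.injective (Subtype.ext hy)
        omega
  refine ⟨⟨g, hginj, hgcoinf⟩, ?_⟩
  apply Subtype.ext; funext x
  exact hg1 x

/-- countable subsets of `Omega1` are bounded -/
lemma bounded (s : ℕ → Omega1) : ∃ b : Omega1, ∀ n, s n ≤ b := by
  have hlt : (⨆ n, (s n).ord) < (Cardinal.aleph 1).ord := by
    apply Ordinal.iSup_lt_ord
    · rw [Cardinal.isRegular_aleph_one.cof_eq]
      exact lt_of_le_of_lt Cardinal.mk_le_aleph0 Cardinal.aleph0_lt_aleph_one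
    · exact fun n => (s n).2
  exact ⟨⟨_, hlt⟩, fun n => Ordinal.le_iSup (fun n => (s n).ord) n⟩

lemma mono_eventually_const (g : Omega1 → ℕ)
    (mono : ∀ {x y : Omega1}, x ≤ y → g x ≤ g y) :
    ∃ x, ∀ y, x ≤ y → g y = g x := by
  by_contra hcon
  push_neg at hcon
  have step : ∀ x : Omega1, ∃ y, x ≤ y ∧ g x < g y := by
    intro x
    obtain ⟨y, hy1, hy2⟩ := hcon x
    exact ⟨y, hy1, lt_of_le_of_ne (mono hy1) (Ne.symm hy2)⟩
  let s : ℕ → Omega1 := fun n => Nat.rec (Classical.arbitrary Omega1)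
    (fun _ p => (step p).choose) n
  have hs : ∀ n, g (s n) ≥ n := by
    intro n
    induction n with
    | zero => omega
    | succ n ih =>
      have h2 := (step (s n)).choose_spec.2
      rw [show s (n+1) = (step (s n)).choose from rfl]
      omega
  obtain ⟨b, hb⟩ := bounded s
  have : ∀ n, (n : ℕ) ≤ g b := fun n => le_trans (hs n) (mono (hb n))
  exact absurd (this (g b + 1)) (by omega)

/-- no global thread through the `Fset` system -/
lemma no_thread (t : ∀ a : Omega1, Fset a)
    (ht : ∀ (a b : Omega1) (h : a ≤ b), rmap h (t b) = t a) : False := by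
  classical
  let elem : ∀ (x c : Omega1), x < c → tau c := fun x c hxc =>
    (Ordinal.ToType.mk (o := c.ord)) ⟨x.ord, Set.mem_Iio.mpr hxc⟩
  let m : Omega1 → ℕ := fun x => (t (succ x)).1 (elem x (succ x) (self_lt_succ x))
  have key : ∀ (x c : Omega1) (hxc : x < c),
      m x = (t c).1 (elem x c hxc) := by
    intro x c hxc
    have h1 : succ x ≤ c := succ_le_of_lt hxc
    have h0 : m x = (t (succ x)).1 (elem x (succ x) (self_lt_succ x)) := rfl
    rw [h0, ← ht (succ x) c h1]
    show (t c).1 (emb h1 (elem x (succ x) (self_lt_succ x))) = _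
    congr 1
    unfold emb
    rw [show ((Ordinal.ToType.mk (o := (succ x).ord))).symm
        (elem x (succ x) (self_lt_succ x)) = ⟨x.ord, Set.mem_Iio.mpr (self_lt_succ x)⟩ from
      ((Ordinal.ToType.mk (o := (succ x).ord))).symm_apply_apply _]
    rfl
  have hminj : Function.Injective m := by
    intro x y hxy
    rcases lt_trichotomy x y with hlt | heq | hgt
    · exfalso
      have hyc : y < succ y := self_lt_succ y
      have hxc : x < succ y := hlt.trans hyc
      rw [key x (succ y) hxc, key y (succ y) hyc] at hxy
      have h3 := (t (succ y)).2.1 hxy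
      have h2 : x.ord = y.ord := Subtype.mk_eq_mk.mp
        (((Ordinal.ToType.mk (o := (succ y).ord))).injective h3)
      exact absurd (Subtype.ext h2 : x = y) (ne_of_lt hlt)
    · exact heq
    · exfalso
      have hxc : x < succ x := self_lt_succ x
      have hyc : y < succ x := hgt.trans hxc
      rw [key x (succ x) hxc, key y (succ x) hyc] at hxy
      have h3 := (t (succ x)).2.1 hxy
      have h2 : x.ord = y.ord := Subtype.mk_eq_mk.mp
        (((Ordinal.ToType.mk (o := (succ x).ord))).injective h3)
      exact absurd (Subtype.ext h2 : x = y) (ne_of_gt hgt)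
  -- cardinality contradiction
  have hcard : #Omega1 ≤ #(ULift.{1} ℕ) :=
    Cardinal.mk_le_of_injective (f := fun x => ULift.up (m x))
      (fun x y h => hminj (congrArg ULift.down h))
  have h1 : #Omega1 = Cardinal.lift.{1, 0} (Cardinal.aleph 1) := by
    have h0 : #Omega1 = #(Set.Iio ((Cardinal.aleph 1).ord)) := rfl
    rw [h0, Ordinal.mk_Iio_ordinal, Cardinal.card_ord]
  have h2 : #(ULift.{1} ℕ) = Cardinal.lift.{1, 0} Cardinal.aleph0 := by
    rw [Cardinal.mk_uLift, Cardinal.mk_nat]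
  rw [h1, h2, Cardinal.lift_le] at hcard
  exact absurd hcard (not_le.mpr Cardinal.aleph0_lt_aleph_one)

open CategoryTheory in
/-- the inverse limit of the finitely-supported-measures system on `Fset` vanishes -/
lemma limD_zero {M : Type} [AddCommMonoid M]
    (n : ∀ a : Omega1, Fset a →₀ M)
    (hn : ∀ (a b : Omega1) (h : a ≤ b), Finsupp.mapDomain (rmap h) (n b) = n a) :
    ∀ a, n a = 0 := by
  by_contra hcon
  push_neg at hcon
  obtain ⟨a₀, ha₀⟩ := hcon
  classical
  have hnz : ∀ b, a₀ ≤ b → n b ≠ 0 := by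
    intro b hb h0
    exact ha₀ (by rw [← hn a₀ b hb, h0, Finsupp.mapDomain_zero])
  let S : ∀ (a b : Omega1), a ≤ b → Finset (Fset a) :=
    fun a b h => (n b).support.image (rmap h)
  have Smono : ∀ (a b b' : Omega1) (h : a ≤ b) (h' : b ≤ b'),
      S a b h ⊆ S a b' (h.trans h') := by
    intro a b b' h h' x hx
    obtain ⟨s, hs, rfl⟩ := Finset.mem_image.mp hx
    have hsupp : (n b).support ⊆ (n b').support.image (rmap h') := by
      rw [← hn b b' h']; exact Finsupp.mapDomain_support
    obtain ⟨s', hs', rfl⟩ := Finset.mem_image.mp (hsupp hs)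
    exact Finset.mem_image.mpr ⟨s', hs', (rmap_trans h h' s').symm⟩
  have hstab : ∀ a : Omega1, ∃ σ : Omega1, ∃ hσ : a ≤ σ,
      ∀ c (hc : σ ≤ c), S a c (hσ.trans hc) = S a σ hσ := by
    intro a
    obtain ⟨x, hx⟩ := mono_eventually_const (fun b => (S a (max a b) (le_max_left a b)).card)
      (by
        intro b b' hbb
        exact Finset.card_le_card (Smono a (max a b) (max a b') (le_max_left a b)
          (max_le_max le_rfl hbb)))
    refine ⟨max a x, le_max_left a x, ?_⟩
    intro c hc
    have hac : a ≤ c := (le_max_left a x).trans hc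
    have h1 : S a (max a x) (le_max_left a x) ⊆ S a c hac := Smono _ _ _ _ hc
    have hcard : (S a c hac).card ≤ (S a (max a x) (le_max_left a x)).card := by
      have e1 := hx c ((le_max_right a x).trans hc)
      have h2 : (S a c hac).card ≤ (S a (max a c) (le_max_left a c)).card :=
        Finset.card_le_card (Smono a c (max a c) hac (le_max_right a c))
      omega
    exact (Finset.eq_of_subset_of_card_le h1 hcard).symm
  choose σ hσ1 hσ2 using hstab
  let T : ∀ a, Finset (Fset a) := fun a => S a (σ a) (hσ1 a)
  have hTne : ∀ a, (T a).Nonempty := by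
    intro a
    have h1 : σ a ≤ max (σ a) a₀ := le_max_left _ _
    have h2 := hσ2 a (max (σ a) a₀) h1
    have h3 : (n (max (σ a) a₀)).support.Nonempty :=
      Finsupp.support_nonempty_iff.mpr (hnz _ (le_max_right _ _))
    rw [show T a = S a (σ a) (hσ1 a) from rfl, ← h2]
    exact h3.image _
  have hTmap : ∀ (a b : Omega1) (h : a ≤ b) (t : Fset b), t ∈ T b → rmap h t ∈ T a := by
    intro a b h t htb
    have hbc : σ b ≤ max (σ a) (σ b) := le_max_right _ _
    have hac : σ a ≤ max (σ a) (σ b) := le_max_left _ _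
    rw [show T b = S b (σ b) (hσ1 b) from rfl, ← hσ2 b _ hbc] at htb
    obtain ⟨s, hs, rfl⟩ := Finset.mem_image.mp htb
    rw [show T a = S a (σ a) (hσ1 a) from rfl, ← hσ2 a _ hac]
    exact Finset.mem_image.mpr ⟨s, hs, (rmap_trans h ((hσ1 b).trans hbc) s).symm⟩
  let G : Omega1ᵒᵖ ⥤ Type := {
    obj := fun a => {x // x ∈ T a.unop}
    map := fun {a b} f => TypeCat.ofHom (fun t =>
      ⟨rmap (CategoryTheory.leOfHom f.unop) t.1, hTmap _ _ _ t.1 t.2⟩)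
    map_id := by
      intro a
      refine ConcreteCategory.hom_ext _ _ fun t => ?_
      exact Subtype.ext (rmap_refl _ t.1)
    map_comp := by
      intro a b c f g
      refine ConcreteCategory.hom_ext _ _ fun t => ?_
      exact Subtype.ext (rmap_trans _ _ t.1).symm }
  haveI : ∀ j : Omega1ᵒᵖ, Finite (G.obj j) := by
    intro j
    show Finite {x // x ∈ T j.unop}
    infer_instance
  haveI : ∀ j : Omega1ᵒᵖ, Nonempty (G.obj j) := by
    intro j
    obtain ⟨x, hx⟩ := hTne j.unop
    exact ⟨⟨x, hx⟩⟩
  obtain ⟨sec, hsec⟩ := nonempty_sections_of_finite_inverse_system G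
  apply no_thread (fun a => (sec (Opposite.op a)).1)
  intro a b h
  exact congrArg Subtype.val (hsec ((CategoryTheory.homOfLE h).op :
    Opposite.op b ⟶ Opposite.op a))

end
end Omega1

noncomputable section
section InjLemmas
variable {R : Type} [Ring R]

lemma injective_prod {X Y : Type} [AddCommGroup X] [AddCommGroup Y] [Module R X] [Module R Y]
    (hX : Module.Injective R X) (hY : Module.Injective R Y) : Module.Injective R (X × Y) := by
  constructor
  intro A B _ _ _ _ f hf g
  obtain ⟨hx, hhx⟩ := hX.out f hf ((LinearMap.fst R X Y).comp g)
  obtain ⟨hy, hhy⟩ := hY.out f hf ((LinearMap.snd R X Y).comp g)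
  exact ⟨hx.prod hy, fun m => Prod.ext (hhx m) (hhy m)⟩

lemma injective_retract {Q K : Type} [AddCommGroup Q] [AddCommGroup K] [Module R Q] [Module R K]
    (hQ : Module.Injective R Q) (i : K →ₗ[R] Q) (p : Q →ₗ[R] K) (hpi : ∀ k, p (i k) = k) :
    Module.Injective R K := by
  constructor
  intro A B _ _ _ _ f hf g
  obtain ⟨h, hh⟩ := hQ.out f hf (i.comp g)
  refine ⟨p.comp h, fun m => ?_⟩
  have := hh m
  simp only [LinearMap.comp_apply] at this ⊢
  rw [this, hpi]

lemma injective_finsupp [IsNoetherianRing R] {Q : Type} [AddCommGroup Q] [Module R Q]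
    (hQ : Module.Injective R Q) (ι : Type) : Module.Injective R (ι →₀ Q) := by
  apply Module.Baer.injective
  intro I g
  classical
  obtain ⟨s, hs⟩ := IsNoetherian.noetherian I
  have hsI : ∀ x ∈ s, x ∈ I := fun x hx => by
    rw [← hs]; exact Submodule.subset_span hx
  set T : Finset ι := s.attach.biUnion
    (fun x => (g ⟨x.1, hsI x.1 x.2⟩).support) with hT
  -- every value of g is supported in T
  have hW : ∀ y : I, g y ∈ Finsupp.supported Q R (↑T : Set ι) := by
    set W : Submodule R I := Submodule.comap g (Finsupp.supported Q R (↑T : Set ι)) with hWdef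
    have hU : I ≤ Submodule.map I.subtype W := by
      have hU0 : Submodule.span R (↑s : Set R) ≤ Submodule.map I.subtype W := by
        apply Submodule.span_le.mpr
        intro x hx
        refine ⟨⟨x, hsI x hx⟩, ?_, rfl⟩
        show g ⟨x, hsI x hx⟩ ∈ Finsupp.supported Q R (↑T : Set ι)
        rw [Finsupp.mem_supported]
        intro t ht
        simp only [Finset.coe_biUnion, Finset.mem_coe, Finset.mem_attach, Set.mem_iUnion,
          Finset.mem_coe, hT]
        exact ⟨⟨x, hx⟩, trivial, ht⟩
      rw [hs] at hU0
      exact hU0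
    intro y
    obtain ⟨w, hw, hwy⟩ := hU y.2
    have : w = y := Subtype.ext hwy
    rw [← this]
    exact hw
  -- coordinatewise extensions
  have extn : ∀ t : ι, ∃ h : R →ₗ[R] Q, ∀ y : I, h y.1 = (g y) t := by
    intro t
    obtain ⟨h, hh⟩ := hQ.out I.subtype (Submodule.injective_subtype I)
      ((Finsupp.lapply t).comp g)
    exact ⟨h, fun y => hh y⟩
  choose h hh using extn
  refine ⟨∑ t ∈ T, (Finsupp.lsingle t).comp (h t), ?_⟩
  intro x hx
  rw [LinearMap.sum_apply]
  apply Finsupp.ext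
  intro a
  rw [Finset.sum_apply']
  have hterm : ∀ t ∈ T, ((Finsupp.lsingle t).comp (h t) x) a
      = if t = a then (g ⟨x, hx⟩) t else 0 := by
    intro t _
    simp only [LinearMap.comp_apply, Finsupp.lsingle_apply, Finsupp.single_apply]
    rw [hh t ⟨x, hx⟩]
  rw [Finset.sum_congr rfl hterm]
  rw [Finset.sum_ite_eq' T a (fun t => (g ⟨x, hx⟩) t)]
  by_cases ha : a ∈ T
  · rw [if_pos ha]
  · rw [if_neg ha]
    symm
    by_contra hne
    exact ha (hW ⟨x, hx⟩ (Finsupp.mem_support_iff.mpr hne))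

open CategoryTheory in
lemma exists_injective_embedding (M : Type) [AddCommGroup M] [Module R M] :
    ∃ (E : Type) (_ : AddCommGroup E) (_ : Module R E),
      Module.Injective R E ∧ ∃ f : M →ₗ[R] E, Function.Injective f := by
  haveI : EnoughInjectives (ModuleCat.{0} R) := inferInstance
  let Mc : ModuleCat.{0} R := ModuleCat.of R M
  let E := Injective.under Mc
  refine ⟨E, inferInstance, inferInstance, ?_, (Injective.ι Mc).hom, ?_⟩
  · haveI : CategoryTheory.Injective (ModuleCat.of R E) := Injective.injective_under Mc
    exact Module.injective_module_of_injective_object R E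
  · exact (ModuleCat.mono_iff_injective (Injective.ι Mc)).mp inferInstance

end InjLemmas
end

/-- The inverse limit of an inverse system of modules, realized as the submodule of the
direct product consisting of the compatible families. -/
def invLim {R : Type u} [Ring R] {ι : Type v} [Preorder ι] (P : ι → Type u)
    [∀ i, AddCommGroup (P i)] [∀ i, Module R (P i)]
    (φ : ∀ i j : ι, i ≤ j → (P j →ₗ[R] P i)) : Submodule R (∀ i, P i) where
  carrier := {x | ∀ (i j : ι) (h : i ≤ j), φ i j h (x j) = x i}
  zero_mem' := by intro i j h; simp
  add_mem' := by intro a b ha hb i j h; simp [ha i j h, hb i j h]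
  smul_mem' := by intro c a ha i j h; simp [ha i j h]

open Omega1 in
/-- Over a left Noetherian ring, every left module is the inverse limit of an
`ω₁`-indexed inverse system of injective modules with surjective transition maps. -/
theorem module_eq_invLim_surjective_of_injectives (R : Type) [Ring R] [IsNoetherianRing R]
    (A : Type) [AddCommGroup A] [Module R A] :
    ∃ (P : Omega1 → Type) (_ : ∀ a, AddCommGroup (P a)) (_ : ∀ a, Module R (P a)),
      ∃ φ : ∀ a b : Omega1, a ≤ b → (P b →ₗ[R] P a),
        (∀ a, φ a a le_rfl = LinearMap.id) ∧
        (∀ (a b c : Omega1) (hab : a ≤ b) (hbc : b ≤ c),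
          (φ a b hab).comp (φ b c hbc) = φ a c (hab.trans hbc)) ∧
        (∀ a, Module.Injective R (P a)) ∧
        (∀ (a b : Omega1) (h : a ≤ b), Function.Surjective (φ a b h)) ∧
        Nonempty (A ≃ₗ[R] ↥(invLim P φ)) := by
  classical
  obtain ⟨E, _, _, hE, iA, hiA⟩ := exists_injective_embedding (R := R) A
  obtain ⟨E', _, _, hE', i2, hi2⟩ :=
    exists_injective_embedding (R := R) (E ⧸ LinearMap.range iA)
  set f : E →ₗ[R] E' := i2 ∘ₗ (LinearMap.range iA).mkQ with hfdef
  have hker : LinearMap.ker f = LinearMap.range iA := by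
    rw [hfdef, LinearMap.ker_comp, LinearMap.ker_eq_bot.mpr hi2,
      Submodule.comap_bot, Submodule.ker_mkQ]
  -- the measure system
  let u : ∀ a : Omega1, Fset a := fun a => Classical.arbitrary _
  let push : ∀ {a b : Omega1}, a ≤ b → ((Fset b →₀ E') →ₗ[R] (Fset a →₀ E')) :=
    fun {a b} h => Finsupp.lmapDomain E' R (rmap h)
  let ms : ∀ (γ : Type), (γ →₀ E') →ₗ[R] E' :=
    fun γ => Finsupp.lsum ℕ (fun _ => (LinearMap.id : E' →ₗ[R] E'))
  have ms_single : ∀ (γ : Type) (x : γ) (c : E'), ms γ (Finsupp.single x c) = c := by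
    intro γ x c
    simp [ms]
  have ms_lmap : ∀ {γ δ : Type} (k : γ → δ) (v : γ →₀ E'),
      ms δ (Finsupp.mapDomain k v) = ms γ v := by
    intro γ δ k v
    have hcomp : (ms δ).comp (Finsupp.lmapDomain E' R k) = ms γ := by
      apply Finsupp.lhom_ext
      intro x y
      simp only [LinearMap.comp_apply, Finsupp.lmapDomain_apply, Finsupp.mapDomain_single]
      rw [ms_single, ms_single]
    calc ms δ (Finsupp.mapDomain k v) = ((ms δ).comp (Finsupp.lmapDomain E' R k)) v := rfl
      _ = ms γ v := by rw [hcomp]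
  have push_push : ∀ {a b c : Omega1} (hab : a ≤ b) (hbc : b ≤ c) (v : Fset c →₀ E'),
      push hab (push hbc v) = push (hab.trans hbc) v := by
    intro a b c hab hbc v
    show Finsupp.mapDomain (rmap hab) (Finsupp.mapDomain (rmap hbc) v)
      = Finsupp.mapDomain (rmap (hab.trans hbc)) v
    rw [← Finsupp.mapDomain_comp]
    congr 1
    funext x
    exact rmap_trans hab hbc x
  have push_refl : ∀ (a : Omega1) (v : Fset a →₀ E'), push (le_refl a) v = v := by
    intro a v
    show Finsupp.mapDomain (rmap (le_refl a)) v = v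
    rw [show rmap (le_refl a) = id from funext (rmap_refl a), Finsupp.mapDomain_id]
  let K : ∀ a : Omega1, Submodule R (Fset a →₀ E') := fun a => LinearMap.ker (ms (Fset a))
  let P : Omega1 → Type := fun a => E × ↥(K a)
  -- the transition maps
  let θ : ∀ {a b : Omega1}, a ≤ b → (E →ₗ[R] (Fset a →₀ E')) :=
    fun {a b} h => ((Finsupp.lsingle (rmap h (u b))).comp f) - ((Finsupp.lsingle (u a)).comp f)
  let raw : ∀ {a b : Omega1}, a ≤ b → (P b →ₗ[R] (Fset a →₀ E')) :=
    fun {a b} h => (push h).comp ((K b).subtype.comp (LinearMap.snd R E ↥(K b)))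
      + (θ h).comp (LinearMap.fst R E ↥(K b))
  have raw_apply : ∀ {a b : Omega1} (h : a ≤ b) (p : P b),
      raw h p = push h p.2.1 + Finsupp.single (rmap h (u b)) (f p.1)
        - Finsupp.single (u a) (f p.1) := by
    intro a b h p
    show push h p.2.1 + ((Finsupp.lsingle (rmap h (u b))).comp f - (Finsupp.lsingle (u a)).comp f) p.1 = _
    rw [LinearMap.sub_apply]
    simp only [LinearMap.comp_apply, Finsupp.lsingle_apply]
    abel
  have raw_mem : ∀ {a b : Omega1} (h : a ≤ b) (p : P b), raw h p ∈ K a := by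
    intro a b h p
    show ms (Fset a) (raw h p) = 0
    rw [raw_apply h p]
    rw [map_sub, map_add, ms_single, ms_single]
    have h1 : ms (Fset a) (push h p.2.1) = ms (Fset b) p.2.1 := ms_lmap _ _
    have h2 : ms (Fset b) p.2.1 = 0 := p.2.2
    rw [h1, h2]
    abel
  let φ : ∀ (a b : Omega1), a ≤ b → (P b →ₗ[R] P a) := fun a b h =>
    LinearMap.prod (LinearMap.fst R E ↥(K b))
      (LinearMap.codRestrict (K a) (raw h) (raw_mem h))
  have φ_fst : ∀ {a b : Omega1} (h : a ≤ b) (p : P b), (φ a b h p).1 = p.1 := by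
    intro a b h p; rfl
  have φ_snd : ∀ {a b : Omega1} (h : a ≤ b) (p : P b),
      ((φ a b h p).2 : Fset a →₀ E') = raw h p := by
    intro a b h p; rfl
  have push_single : ∀ {a b : Omega1} (h : a ≤ b) (x : Fset b) (c : E'),
      push h (Finsupp.single x c) = Finsupp.single (rmap h x) c := by
    intro a b h x c
    show Finsupp.mapDomain (rmap h) (Finsupp.single x c) = _
    rw [Finsupp.mapDomain_single]
  refine ⟨P, fun a => inferInstance, fun a => inferInstance, φ, ?_, ?_, ?_, ?_, ?_⟩
  · -- identity
    intro a
    apply LinearMap.ext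
    intro p
    apply Prod.ext
    · rfl
    · apply Subtype.ext
      rw [show ((LinearMap.id : P a →ₗ[R] P a) p).2 = p.2 from rfl]
      rw [φ_snd le_rfl p, raw_apply le_rfl p]
      rw [show rmap le_rfl (u a) = u a from rmap_refl a (u a)]
      rw [push_refl a p.2.1]
      abel
  · -- composition
    intro a b c hab hbc
    apply LinearMap.ext
    intro p
    apply Prod.ext
    · rfl
    · apply Subtype.ext
      show raw hab (φ b c hbc p) = raw (hab.trans hbc) p
      rw [raw_apply hab (φ b c hbc p), raw_apply (hab.trans hbc) p, φ_snd hbc p,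
        φ_fst hbc p, raw_apply hbc p]
      rw [map_sub, map_add, push_push hab hbc, push_single, push_single, rmap_trans hab hbc]
      abel
  · -- injectivity
    intro a
    apply injective_prod hE
    refine injective_retract (injective_finsupp hE' (Fset a)) (K a).subtype
      (LinearMap.codRestrict (K a)
        (LinearMap.id - (Finsupp.lsingle (u a)).comp (ms (Fset a)))
        (fun q => by
          show ms (Fset a) (q - Finsupp.single (u a) (ms (Fset a) q)) = 0
          rw [map_sub, ms_single]
          abel)) ?_
    intro k
    apply Subtype.ext
    show k.1 - Finsupp.single (u a) (ms (Fset a) k.1) = k.1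
    rw [show ms (Fset a) k.1 = 0 from k.2, Finsupp.single_zero]
    abel
  · -- surjectivity
    intro a b h p
    let e := p.1
    let sec : Fset a → Fset b := Function.surjInv (rmap_surjective h)
    let z : Fset a →₀ E' := p.2.1 + Finsupp.single (u a) (f e)
      - Finsupp.single (rmap h (u b)) (f e)
    have hsecid : rmap h ∘ sec = id := funext (Function.surjInv_eq (rmap_surjective h))
    have hpz : push h (Finsupp.mapDomain sec z) = z := by
      show Finsupp.mapDomain (rmap h) (Finsupp.mapDomain sec z) = z
      rw [← Finsupp.mapDomain_comp, hsecid, Finsupp.mapDomain_id]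
    have hwK : Finsupp.mapDomain sec z ∈ K b := by
      show ms (Fset b) (Finsupp.mapDomain sec z) = 0
      rw [ms_lmap]
      show ms (Fset a) (p.2.1 + Finsupp.single (u a) (f e)
        - Finsupp.single (rmap h (u b)) (f e)) = 0
      rw [map_sub, map_add, ms_single, ms_single,
        show ms (Fset a) p.2.1 = 0 from p.2.2]
      abel
    refine ⟨(e, ⟨Finsupp.mapDomain sec z, hwK⟩), ?_⟩
    apply Prod.ext
    · rfl
    · apply Subtype.ext
      rw [φ_snd h, raw_apply h]
      show push h (Finsupp.mapDomain sec z) + _ - _ = p.2.1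
      rw [hpz]
      show p.2.1 + Finsupp.single (u a) (f e) - Finsupp.single (rmap h (u b)) (f e)
        + Finsupp.single (rmap h (u b)) (f e) - Finsupp.single (u a) (f e) = p.2.1
      abel
  · -- the limit is A
    let L : A →ₗ[R] (∀ c, P c) := LinearMap.pi (fun c => LinearMap.prod iA 0)
    have hfiA : ∀ x : A, f (iA x) = 0 := by
      intro x
      have : iA x ∈ LinearMap.ker f := by
        rw [hker]; exact LinearMap.mem_range_self iA x
      exact this
    have hL : ∀ x, L x ∈ invLim P φ := by
      intro x i j hij
      show φ i j hij (L x j) = L x i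
      apply Prod.ext
      · rfl
      · apply Subtype.ext
        rw [φ_snd hij, raw_apply hij]
        show push hij ((0 : ↥(K j)) : Fset j →₀ E') + Finsupp.single (rmap hij (u j)) (f (iA x))
          - Finsupp.single (u i) (f (iA x)) = ((0 : ↥(K i)) : Fset i →₀ E')
        rw [hfiA x]
        simp
    let L' : A →ₗ[R] ↥(invLim P φ) := LinearMap.codRestrict (invLim P φ) L hL
    have hinj : Function.Injective L' := by
      intro x y hxy
      have h1 : L x = L y := congrArg Subtype.val hxy
      have h2 : (L x (Classical.arbitrary Omega1)).1 = (L y (Classical.arbitrary Omega1)).1 := by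
        rw [h1]
      exact hiA h2
    have hsurj : Function.Surjective L' := by
      intro x
      have hφx : ∀ (i j : Omega1) (hij : i ≤ j), φ i j hij (x.1 j) = x.1 i := x.2
      have hfst : ∀ (i j : Omega1) (hij : i ≤ j), (x.1 i).1 = (x.1 j).1 := by
        intro i j hij
        rw [← hφx i j hij]
        rfl
      have hsnd : ∀ (i j : Omega1) (hij : i ≤ j), ((x.1 i).2 : Fset i →₀ E') = raw hij (x.1 j) := by
        intro i j hij
        rw [← hφx i j hij]
        rfl
      let n : ∀ c : Omega1, Fset c →₀ E' := fun c =>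
        ((x.1 c).2 : Fset c →₀ E') + Finsupp.single (u c) (f ((x.1 c).1))
      have hcompat : ∀ (i j : Omega1) (hij : i ≤ j),
          Finsupp.mapDomain (rmap hij) (n j) = n i := by
        intro i j hij
        show Finsupp.mapDomain (rmap hij)
          (((x.1 j).2 : Fset j →₀ E') + Finsupp.single (u j) (f ((x.1 j).1)))
          = ((x.1 i).2 : Fset i →₀ E') + Finsupp.single (u i) (f ((x.1 i).1))
        rw [Finsupp.mapDomain_add, Finsupp.mapDomain_single]
        rw [hsnd i j hij, raw_apply hij]
        rw [hfst i j hij]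
        have hpm : Finsupp.mapDomain (rmap hij) ((x.1 j).2 : Fset j →₀ E')
            = push hij ((x.1 j).2 : Fset j →₀ E') := rfl
        rw [hpm]
        abel
      have hzero := limD_zero n hcompat
      have hf0 : ∀ c, f ((x.1 c).1) = 0 := by
        intro c
        have h1 : ms (Fset c) (n c) = 0 := by rw [hzero c]; simp
        have h2 : ms (Fset c) (n c)
            = ms (Fset c) ((x.1 c).2 : Fset c →₀ E') + f ((x.1 c).1) := by
          show ms (Fset c) (((x.1 c).2 : Fset c →₀ E') + Finsupp.single (u c) (f ((x.1 c).1))) = _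
          rw [map_add, ms_single]
        rw [h2, show ms (Fset c) ((x.1 c).2 : Fset c →₀ E') = 0 from (x.1 c).2.2,
          zero_add] at h1
        exact h1
      have hm0 : ∀ c, ((x.1 c).2 : Fset c →₀ E') = 0 := by
        intro c
        have h1 : ((x.1 c).2 : Fset c →₀ E')
            = n c - Finsupp.single (u c) (f ((x.1 c).1)) := by
          show _ = ((x.1 c).2 : Fset c →₀ E') + Finsupp.single (u c) (f ((x.1 c).1))
            - Finsupp.single (u c) (f ((x.1 c).1))
          abel
        rw [h1, hzero c, hf0 c, Finsupp.single_zero]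
        abel
      let c₀ : Omega1 := Classical.arbitrary Omega1
      have hmem : (x.1 c₀).1 ∈ LinearMap.range iA := by
        rw [← hker]
        exact hf0 c₀
      obtain ⟨y, hy⟩ := hmem
      refine ⟨y, ?_⟩
      apply Subtype.ext
      funext c
      have hec : (x.1 c).1 = (x.1 c₀).1 := by
        rcases le_total c c₀ with hcc | hcc
        · exact hfst c c₀ hcc
        · exact (hfst c₀ c hcc).symm
      show (iA y, (0 : ↥(K c))) = x.1 c
      apply Prod.ext
      · show iA y = (x.1 c).1
        rw [hy, hec]
      · apply Subtype.ext
        show (0 : Fset c →₀ E') = ((x.1 c).2 : Fset c →₀ E')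
        rw [hm0 c]
    exact ⟨LinearEquiv.ofBijective L' ⟨hinj, hsurj⟩⟩
end

section
/- Suppose $(S_\alpha, f_{\alpha\beta})_{\alpha\le\beta<\omega_1}$ is an inverse system of nonempty sets with surjective transition maps whose inverse limit is empty. Let $N$ be a nonzero left module over a ring $R$. For each $\alpha$, form the direct sum $\bigoplus_{S_\alpha} N$, with transition maps $\varphi_{\alpha\beta}$ sending $(x_j)_{j\in S_\beta}$ to $(y_i)_{i\in S_\alpha}$ where $y_i = \sum_{f_{\alpha\beta}(j)=i} x_j$. Then each $\varphi_{\alpha\beta}$ is surjective, but the inverse limit of this system of $R$-modules is the zero module. -/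
universe u v

/-- Every countable family in `Omega1` is bounded above. -/
lemma Omega1.bounded_of_countable (g : ℕ → Omega1) : ∃ b : Omega1, ∀ k, g k ≤ b := by
  have h : (⨆ k, (g k).1) < (Cardinal.aleph 1).ord :=
    by simpa using Ordinal.iSup_lt_omega_one (f := fun k => (g k).1) (fun k => by simpa using (g k).2)
  refine ⟨⟨_, h⟩, fun k => ?_⟩
  show (g k).1 ≤ _
  exact le_ciSup (Ordinal.bddAbove_range _) k

/-- `Omega1` is nonempty. -/
noncomputable instance : Nonempty Omega1 := by
  refine ⟨⟨0, ?_⟩⟩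
  rw [Cardinal.lt_ord]
  simpa using (Cardinal.aleph0_pos.trans Cardinal.aleph0_lt_aleph_one)

/-- A monotone `ℕ`-valued function on `Omega1` is eventually constant. -/
lemma Omega1.monotone_eventually_const (n : Omega1 → ℕ) (hn : Monotone n) :
    ∃ a₁ : Omega1, ∀ a, a₁ ≤ a → n a = n a₁ := by
  classical
  obtain ⟨b₀⟩ := (inferInstance : Nonempty Omega1)
  set g : ℕ → Omega1 := fun k => if h : ∃ a, k ≤ n a then h.choose else b₀ with hg
  obtain ⟨b, hb⟩ := Omega1.bounded_of_countable g
  refine ⟨b, fun a ha => ?_⟩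
  refine le_antisymm ?_ (hn ha)
  by_contra hlt
  push_neg at hlt
  have hex : ∃ a', n a ≤ n a' := ⟨a, le_rfl⟩
  have h1 : n a ≤ n (g (n a)) := by
    rw [hg]; simp only [dif_pos hex]; exact hex.choose_spec
  have h2 : n (g (n a)) ≤ n b := hn (hb (n a))
  omega

open CategoryTheory in
/-- A linearly-directed inverse system of nonempty finite types has a thread. -/
lemma thread_exists {ι : Type u} [Preorder ι] [IsDirected ι (· ≤ ·)] (T : ι → Type v)
    [∀ a, Finite (T a)] [∀ a, Nonempty (T a)]
    (g : ∀ a b : ι, a ≤ b → T b → T a)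
    (hgid : ∀ a (x : T a), g a a le_rfl x = x)
    (hgcomp : ∀ (a b c : ι) (hab : a ≤ b) (hbc : b ≤ c) (x : T c),
      g a b hab (g b c hbc x) = g a c (hab.trans hbc) x) :
    ∃ y : ∀ a, T a, ∀ (a b : ι) (h : a ≤ b), g a b h (y b) = y a := by
  let F : ιᵒᵖ ⥤ Type v :=
    { obj := fun j => T j.unop
      map := fun {j j'} φ => TypeCat.ofHom (fun x => g j'.unop j.unop (leOfHom φ.unop) x)
      map_id := fun j => by
        ext x
        exact hgid _ x
      map_comp := fun {j j' j''} φ ψ => by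
        ext x
        exact (hgcomp _ _ _ (leOfHom ψ.unop) (leOfHom φ.unop) x).symm }
  obtain ⟨u, hu⟩ := nonempty_sections_of_finite_inverse_system F
  refine ⟨fun a => u (Opposite.op a), fun a b h => ?_⟩
  exact hu ((homOfLE h).op)

/-- Given an `ω₁`-indexed inverse system of nonempty sets with surjective transition maps
and empty inverse limit, and a nonzero module `N`, the associated inverse system of
direct sums `⊕_{S_α} N` (with transition maps summing over fibers) has surjective
transition maps but zero inverse limit. -/
theorem invLim_finsupp_eq_bot (R : Type) [Ring R] (N : Type) [AddCommGroup N] [Module R N]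
    [Nontrivial N]
    (S : Omega1 → Type) (f : ∀ a b : Omega1, a ≤ b → S b → S a)
    (hne : ∀ a, Nonempty (S a))
    (hid : ∀ (a : Omega1) (x : S a), f a a le_rfl x = x)
    (hcomp : ∀ (a b c : Omega1) (hab : a ≤ b) (hbc : b ≤ c) (x : S c),
      f a b hab (f b c hbc x) = f a c (hab.trans hbc) x)
    (hsurj : ∀ (a b : Omega1) (h : a ≤ b), Function.Surjective (f a b h))
    (hempty : IsEmpty {x : ∀ a, S a // ∀ (a b : Omega1) (h : a ≤ b), f a b h (x b) = x a}) :
    (∀ (a b : Omega1) (h : a ≤ b),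
        Function.Surjective (Finsupp.lmapDomain N R (f a b h) : (S b →₀ N) →ₗ[R] (S a →₀ N))) ∧
    invLim (fun a => S a →₀ N) (fun a b h => Finsupp.lmapDomain N R (f a b h)) = ⊥ := by
  classical
  constructor
  · -- surjectivity
    intro a b h y
    refine ⟨Finsupp.mapDomain (Function.surjInv (hsurj a b h)) y, ?_⟩
    show Finsupp.mapDomain (f a b h) _ = y
    rw [← Finsupp.mapDomain_comp]
    have hfs : f a b h ∘ Function.surjInv (hsurj a b h) = id :=
      funext (Function.surjInv_eq (hsurj a b h))
    rw [hfs, Finsupp.mapDomain_id]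
  · -- zero inverse limit
    rw [eq_bot_iff]
    intro x hx
    rw [Submodule.mem_bot]
    have hc : ∀ (a b : Omega1) (h : a ≤ b),
        Finsupp.mapDomain (f a b h) (x b) = x a := hx
    by_contra hx0
    obtain ⟨a₀, ha₀⟩ : ∃ a, x a ≠ 0 := Function.ne_iff.mp hx0
    set n : Omega1 → ℕ := fun a => (x a).support.card with hn
    have hmono : Monotone n := by
      intro a b h
      have hsub : (x a).support ⊆ (x b).support.image (f a b h) := by
        rw [← hc a b h]
        exact Finsupp.mapDomain_support
      calc (x a).support.card ≤ ((x b).support.image (f a b h)).card :=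
            Finset.card_le_card hsub
        _ ≤ (x b).support.card := Finset.card_image_le
    obtain ⟨a₁', ha₁'⟩ := Omega1.monotone_eventually_const n hmono
    set a₁ : Omega1 := max a₁' a₀ with ha₁def
    have hconst : ∀ a, a₁ ≤ a → n a = n a₁ := by
      intro a ha
      rw [ha₁' a ((le_max_left _ _).trans ha), ha₁' a₁ (le_max_left _ _)]
    have hmpos : 0 < n a₁ := by
      have : 0 < n a₀ := Finset.card_pos.mpr (Finsupp.support_nonempty_iff.mpr ha₀)
      exact this.trans_le (hmono (le_max_right _ _))
    -- supports map onto each other above a₁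
    have himg : ∀ (a b : Omega1) (ha : a₁ ≤ a) (h : a ≤ b),
        (x a).support = (x b).support.image (f a b h) := by
      intro a b ha h
      have hsub : (x a).support ⊆ (x b).support.image (f a b h) := by
        rw [← hc a b h]
        exact Finsupp.mapDomain_support
      refine Finset.eq_of_subset_of_card_le hsub ?_
      calc ((x b).support.image (f a b h)).card ≤ (x b).support.card :=
            Finset.card_image_le
        _ = (x a).support.card := by
            rw [show (x b).support.card = n b from rfl, show (x a).support.card = n a from rfl,
              hconst b (ha.trans h), hconst a ha]
    -- the restricted system of supports
    let I := {a : Omega1 // a₁ ≤ a}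
    let T : I → Type := fun a => {t : S a.1 // t ∈ (x a.1).support}
    haveI hTfin : ∀ a : I, Finite (T a) := fun a =>
      inferInstanceAs (Finite ((x a.1).support : Finset (S a.1)))
    haveI hTne : ∀ a : I, Nonempty (T a) := by
      intro a
      have : 0 < n a.1 := by rw [hconst a.1 a.2]; exact hmpos
      obtain ⟨t, ht⟩ := Finset.card_pos.mp this
      exact ⟨⟨t, ht⟩⟩
    let g : ∀ a b : I, a ≤ b → T b → T a := fun a b h t =>
      ⟨f a.1 b.1 h t.1, by
        rw [himg a.1 b.1 a.2 h]
        exact Finset.mem_image_of_mem _ t.2⟩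
    obtain ⟨y, hy⟩ := thread_exists T g
      (fun a t => Subtype.ext (hid a.1 t.1))
      (fun a b c hab hbc t => Subtype.ext (hcomp a.1 b.1 c.1 hab hbc t.1))
    -- extend the thread to all of Omega1
    let z : ∀ a : Omega1, S a := fun a =>
      f a (max a a₁) (le_max_left _ _) (y ⟨max a a₁, le_max_right _ _⟩).1
    have hz : ∀ (a b : Omega1) (h : a ≤ b), f a b h (z b) = z a := by
      intro a b h
      have hm : (⟨max a a₁, le_max_right _ _⟩ : I) ≤ ⟨max b a₁, le_max_right _ _⟩ :=
        max_le_max h le_rfl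
      have hyy := congrArg Subtype.val (hy _ _ hm)
      show f a b h (f b (max b a₁) _ _) = f a (max a a₁) _ _
      rw [hcomp a b (max b a₁) h (le_max_left _ _), ← hyy]
      show _ = f a (max a a₁) _ (f (max a a₁) (max b a₁) _ _)
      rw [hcomp a (max a a₁) (max b a₁) (le_max_left _ _) hm]
    exact hempty.false ⟨z, hz⟩
end

section
/- There exists an inverse system indexed by $\omega_1$ of nonempty sets $S_\alpha$ with surjective transition maps $f_{\alpha\beta}: S_\beta \to S_\alpha$ for $\alpha \le \beta < \omega_1$, whose inverse limit is empty. -/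
universe u v

noncomputable section
namespace Omega1Aux

open Cardinal Ordinal Set Function

/-- Initial segment embedding between `toType`s. -/
def emb {a b : Ordinal.{0}} (h : a ≤ b) (x : a.ToType) : b.ToType :=
  (Ordinal.ToType.mk (o := b)) ⟨((Ordinal.ToType.mk (o := a)).symm x).1,
    Set.mem_Iio.2 (lt_of_lt_of_le (Set.mem_Iio.1 ((Ordinal.ToType.mk (o := a)).symm x).2) h)⟩

/-- The ordinal corresponding to an element of `a.ToType`. -/
def ordOf {a : Ordinal.{0}} (x : a.ToType) : Ordinal.{0} :=
  ((Ordinal.ToType.mk (o := a)).symm x).1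

theorem ordOf_lt {a : Ordinal.{0}} (x : a.ToType) : ordOf x < a :=
  ((Ordinal.ToType.mk (o := a)).symm x).2

theorem ordOf_injective {a : Ordinal.{0}} : Function.Injective (ordOf (a := a)) := by
  intro x y h
  exact (Ordinal.ToType.mk (o := a)).symm.injective (Subtype.ext h)

theorem ordOf_emb {a b : Ordinal.{0}} (h : a ≤ b) (x : a.ToType) :
    ordOf (emb h x) = ordOf x := by
  simp [ordOf, emb]

theorem ordOf_enum {a : Ordinal.{0}} (o : Ordinal.{0}) (ho : o ∈ Set.Iio a) :
    ordOf ((Ordinal.ToType.mk (o := a)) ⟨o, ho⟩) = o := by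
  simp [ordOf]

theorem emb_injective {a b : Ordinal.{0}} (h : a ≤ b) : Function.Injective (emb h) := by
  intro x y hxy
  apply ordOf_injective
  rw [← ordOf_emb h x, ← ordOf_emb h y, hxy]

theorem emb_refl {a : Ordinal.{0}} (x : a.ToType) : emb le_rfl x = x := by
  simp [emb]

theorem emb_trans {a b c : Ordinal.{0}} (hab : a ≤ b) (hbc : b ≤ c) (x : a.ToType) :
    emb hbc (emb hab x) = emb (hab.trans hbc) x := by
  simp [emb]

/-- Ordinal of an element of `Omega1`. -/
def toOrd (a : Omega1) : Ordinal.{0} := Subtype.val a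

theorem toOrd_lt (a : Omega1) : toOrd a < (Cardinal.aleph 1).ord := a.2

theorem le_iff {a b : Omega1} : a ≤ b ↔ toOrd a ≤ toOrd b := Iff.rfl

instance countable_toType (a : Omega1) : Countable (toOrd a).ToType := by
  rw [← Cardinal.mk_le_aleph0_iff, Cardinal.mk_toType]
  have h1 := (Cardinal.lt_ord).1 (toOrd_lt a)
  have h2 : Cardinal.aleph 1 = Order.succ Cardinal.aleph0 := by
    rw [show (1 : Ordinal) = Order.succ 0 by simp, Cardinal.aleph_succ, Cardinal.aleph_zero]
  rw [h2, Order.lt_succ_iff] at h1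
  exact h1

/-- The inverse system: injections into ℕ with coinfinite range. -/
def SFun (a : Omega1) : Type :=
  {g : (toOrd a).ToType → ℕ // Function.Injective g ∧ (Set.range g)ᶜ.Infinite}

/-- Transition maps: restriction along the initial segment embedding. -/
def tmap (a b : Omega1) (h : a ≤ b) (g : SFun b) : SFun a :=
  ⟨g.1 ∘ emb (le_iff.1 h), g.2.1.comp (emb_injective _),
    g.2.2.mono (Set.compl_subset_compl.2 (Set.range_comp_subset_range _ _))⟩

theorem nonempty_SFun (a : Omega1) : Nonempty (SFun a) := by
  obtain ⟨k, kinj⟩ := exists_injective_nat (toOrd a).ToType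
  refine ⟨⟨fun x => 2 * k x, ?_, ?_⟩⟩
  · intro x y h
    have h' : 2 * k x = 2 * k y := h
    exact kinj (by omega)
  · apply Set.infinite_of_injective_forall_mem (f := fun n : ℕ => 2 * n + 1)
    · intro m n h
      have h' : 2 * m + 1 = 2 * n + 1 := h
      omega
    · rintro n ⟨x, hx⟩
      have hx' : 2 * k x = 2 * n + 1 := hx
      omega

theorem tmap_refl (a : Omega1) (g : SFun a) : tmap a a le_rfl g = g := by
  apply Subtype.ext
  funext y
  exact congrArg g.1 (emb_refl y)

theorem tmap_trans (a b c : Omega1) (hab : a ≤ b) (hbc : b ≤ c) (g : SFun c) :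
    tmap a b hab (tmap b c hbc g) = tmap a c (hab.trans hbc) g := by
  apply Subtype.ext
  funext y
  exact congrArg g.1 (emb_trans _ _ y)

theorem tmap_surjective (a b : Omega1) (h : a ≤ b) : Function.Surjective (tmap a b h) := by
  classical
  intro g
  obtain ⟨k, kinj⟩ := exists_injective_nat (toOrd b).ToType
  have hC : (Set.range g.1)ᶜ.Infinite := g.2.2
  let j : ℕ ↪ ((Set.range g.1)ᶜ : Set ℕ) := Set.Infinite.natEmbedding _ hC
  let G : (toOrd b).ToType → ℕ := fun x =>
    if hx : ∃ y, emb (le_iff.1 h) y = x then g.1 hx.choose else (j (2 * k x) : ℕ)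
  have hGemb : ∀ y, G (emb (le_iff.1 h) y) = g.1 y := by
    intro y
    have hx : ∃ y', emb (le_iff.1 h) y' = emb (le_iff.1 h) y := ⟨y, rfl⟩
    have hch : hx.choose = y := emb_injective _ hx.choose_spec
    simp only [G, dif_pos hx, hch]
  have hmemC : ∀ n : ℕ, ((j n : ℕ)) ∉ Set.range g.1 := fun n => (j n).2
  have Ginj : Function.Injective G := by
    intro x₁ x₂ heq
    by_cases h1 : ∃ y, emb (le_iff.1 h) y = x₁ <;>
      by_cases h2 : ∃ y, emb (le_iff.1 h) y = x₂
    · simp only [G, dif_pos h1, dif_pos h2] at heq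
      have := g.2.1 heq
      rw [← h1.choose_spec, ← h2.choose_spec, this]
    · simp only [G, dif_pos h1, dif_neg h2] at heq
      exact absurd ⟨_, heq⟩ (hmemC _)
    · simp only [G, dif_neg h1, dif_pos h2] at heq
      exact absurd ⟨_, heq.symm⟩ (hmemC _)
    · simp only [G, dif_neg h1, dif_neg h2] at heq
      have := j.injective (Subtype.ext heq)
      have : k x₁ = k x₂ := by omega
      exact kinj this
  have Gcoinf : (Set.range G)ᶜ.Infinite := by
    apply Set.infinite_of_injective_forall_mem (f := fun n : ℕ => ((j (2 * n + 1) : ℕ)))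
    · intro m n hmn
      have := j.injective (Subtype.ext hmn)
      omega
    · rintro n ⟨x, hxn⟩
      by_cases hx : ∃ y, emb (le_iff.1 h) y = x
      · simp only [G, dif_pos hx] at hxn
        exact hmemC _ ⟨_, hxn⟩
      · simp only [G, dif_neg hx] at hxn
        have := j.injective (Subtype.ext hxn)
        omega
  refine ⟨⟨G, Ginj, Gcoinf⟩, ?_⟩
  apply Subtype.ext
  funext y
  exact hGemb y

theorem limit_empty :
    IsEmpty {x : ∀ a, SFun a // ∀ (a b : Omega1) (h : a ≤ b), tmap a b h (x b) = x a} := by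
  constructor
  rintro ⟨x, hx⟩
  have hlim : Order.IsSuccLimit ((Cardinal.aleph 1).ord) := Cardinal.isSuccLimit_ord (Cardinal.aleph0_le_aleph 1)
  set W : Ordinal.{0} := (Cardinal.aleph 1).ord with hW
  let A : W.ToType → Omega1 := fun t => ⟨Order.succ (ordOf t), hlim.succ_lt (ordOf_lt t)⟩
  have hAord : ∀ t, toOrd (A t) = Order.succ (ordOf t) := fun t => rfl
  let e : ∀ t : W.ToType, (toOrd (A t)).ToType := fun t =>
    (Ordinal.ToType.mk) ⟨ordOf t, Set.mem_Iio.2 (Order.lt_succ _)⟩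
  have he : ∀ t, ordOf (e t) = ordOf t := fun t => ordOf_enum _ _
  let F : W.ToType → ℕ := fun t => (x (A t)).1 (e t)
  have key : ∀ t₁ t₂ : W.ToType, ordOf t₁ < ordOf t₂ → F t₁ ≠ F t₂ := by
    intro t₁ t₂ hlt hF
    have hle : A t₁ ≤ A t₂ := le_iff.2 (Order.succ_le_succ hlt.le)
    have hcomp := hx (A t₁) (A t₂) hle
    have h1 : F t₁ = (x (A t₂)).1 (emb (le_iff.1 hle) (e t₁)) := by
      show (x (A t₁)).1 (e t₁) = _
      rw [← hcomp]
      rfl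
    rw [h1] at hF
    have := (x (A t₂)).2.1 hF
    have : ordOf (emb (le_iff.1 hle) (e t₁)) = ordOf (e t₂) := by rw [this]
    rw [ordOf_emb, he, he] at this
    exact absurd this hlt.ne
  have Finj : Function.Injective F := by
    intro t₁ t₂ hF
    by_contra hne
    have hord : ordOf t₁ ≠ ordOf t₂ := fun hh => hne (ordOf_injective hh)
    rcases hord.lt_or_gt with hlt | hlt
    · exact key t₁ t₂ hlt hF
    · exact key t₂ t₁ hlt hF.symm
  have hcnt : Countable W.ToType := ⟨⟨F, Finj⟩⟩
  have h1 : (Cardinal.mk W.ToType) ≤ Cardinal.aleph0 := Cardinal.mk_le_aleph0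
  rw [Cardinal.mk_toType, Cardinal.card_ord] at h1
  exact absurd h1 (Cardinal.aleph0_lt_aleph_one).not_ge

end Omega1Aux
end

open Omega1Aux in
/-- There exists an inverse system, indexed by the first uncountable ordinal `ω₁`, of
nonempty sets with surjective transition maps, whose inverse limit is empty. -/
theorem exists_omega1_system_empty_limit :
    ∃ (S : Omega1 → Type) (f : ∀ a b : Omega1, a ≤ b → S b → S a),
      (∀ a, Nonempty (S a)) ∧
      (∀ (a : Omega1) (x : S a), f a a le_rfl x = x) ∧
      (∀ (a b c : Omega1) (hab : a ≤ b) (hbc : b ≤ c) (x : S c),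
        f a b hab (f b c hbc x) = f a c (hab.trans hbc) x) ∧
      (∀ (a b : Omega1) (h : a ≤ b), Function.Surjective (f a b h)) ∧
      IsEmpty {x : ∀ a, S a // ∀ (a b : Omega1) (h : a ≤ b), f a b h (x b) = x a} := by
  exact ⟨SFun, tmap, nonempty_SFun, tmap_refl, tmap_trans, tmap_surjective, limit_empty⟩
end

section
/- Let $R$ be a ring, $M$ the inverse limit of a countable directed system of injective left $R$-modules $M_\alpha$ with surjective transition maps, and $N$ the direct limit of a countable directed system of projective left $R$-modules $N_\gamma$ with injective transition maps. Then any homomorphism $f: N_\gamma \to M_\alpha$ factors as $N_\gamma \to N \to M \to M_\alpha$, where the first and last maps are the canonical maps into the direct limit and out of the inverse limit, and the middle map is some module homomorphism $N \to M$. -/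
universe u v

/-- Any countable directed nonempty preorder has a monotone cofinal chain starting at any
given point. -/
theorem exists_cofinal_chain {ι : Type*} [Preorder ι] [IsDirected ι (· ≤ ·)] [Countable ι]
    [Nonempty ι] (a : ι) :
    ∃ c : ℕ → ι, Monotone c ∧ c 0 = a ∧ ∀ i, ∃ n, i ≤ c n := by
  obtain ⟨u, hu⟩ := exists_surjective_nat ι
  choose ub hub1 hub2 using fun x y : ι => exists_ge_ge x y
  refine ⟨fun n => Nat.rec a (fun n cn => ub cn (u n)) n, ?_, rfl, ?_⟩
  · exact monotone_nat_of_le_succ fun n => hub1 _ _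
  · intro i
    obtain ⟨n, rfl⟩ := hu i
    exact ⟨n + 1, hub2 _ _⟩

/-- Factorization lemma: with `M` a countable inverse limit of injectives along
surjections and `N` a countable direct limit of projectives along injections, any
homomorphism `N_γ → M_α` factors through the canonical maps `N_γ → N` and `M → M_α`. -/
theorem factor_through_limits (R : Type) [Ring R]
    (ι : Type) [Preorder ι] [IsDirected ι (· ≤ ·)] [Countable ι] [Nonempty ι]
    (M : ι → Type) [∀ i, AddCommGroup (M i)] [∀ i, Module R (M i)]
    (φ : ∀ i j : ι, i ≤ j → (M j →ₗ[R] M i))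
    (hφid : ∀ i, φ i i le_rfl = LinearMap.id)
    (hφcomp : ∀ (i j k : ι) (hij : i ≤ j) (hjk : j ≤ k),
      (φ i j hij).comp (φ j k hjk) = φ i k (hij.trans hjk))
    (hMinj : ∀ i, Module.Injective R (M i))
    (hφsurj : ∀ (i j : ι) (h : i ≤ j), Function.Surjective (φ i j h))
    (J : Type) [Preorder J] [IsDirected J (· ≤ ·)] [Countable J] [Nonempty J] [DecidableEq J]
    (N : J → Type) [∀ j, AddCommGroup (N j)] [∀ j, Module R (N j)]
    (ψ : ∀ i j : J, i ≤ j → (N i →ₗ[R] N j)) [DirectedSystem N (fun i j h => ψ i j h)]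
    (hNproj : ∀ j, Module.Projective R (N j))
    (hψinj : ∀ (i j : J) (h : i ≤ j), Function.Injective (ψ i j h))
    (γ : J) (α : ι) (f : N γ →ₗ[R] M α) :
    ∃ g : Module.DirectLimit N ψ →ₗ[R] ↥(invLim M φ),
      ((LinearMap.proj α).comp (invLim M φ).subtype).comp
          (g.comp (Module.DirectLimit.of R J N ψ γ)) = f := by
  obtain ⟨c, hcm, hc0, hccof⟩ := exists_cofinal_chain α
  obtain ⟨d, hdm, hd0, hdcof⟩ := exists_cofinal_chain γ
  subst hc0 hd0
  -- Step: lift along the surjection (projectivity) then extend along the injection (injectivity)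
  have step : ∀ n (fn : N (d n) →ₗ[R] M (c n)),
      ∃ fn1 : N (d (n+1)) →ₗ[R] M (c (n+1)), ∀ y,
        φ (c n) (c (n+1)) (hcm (Nat.le_succ n))
          (fn1 (ψ (d n) (d (n+1)) (hdm (Nat.le_succ n)) y)) = fn y := by
    intro n fn
    haveI := hNproj (d n)
    obtain ⟨h, hh⟩ := Module.projective_lifting_property
      (φ (c n) (c (n+1)) (hcm (Nat.le_succ n))) fn (hφsurj _ _ _)
    obtain ⟨f', hf'⟩ := (hMinj (c (n+1))).out
      (ψ (d n) (d (n+1)) (hdm (Nat.le_succ n))) (hψinj _ _ _) h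
    exact ⟨f', fun y => by rw [hf' y]; exact LinearMap.congr_fun hh y⟩
  let F : ∀ n, N (d n) →ₗ[R] M (c n) := fun n =>
    Nat.rec f (fun k fk => (step k fk).choose) n
  have hF : ∀ n y, φ (c n) (c (n+1)) (hcm (Nat.le_succ n))
      (F (n+1) (ψ (d n) (d (n+1)) (hdm (Nat.le_succ n)) y)) = F n y :=
    fun n => (step n (F n)).choose_spec
  have hFc : ∀ n m (h : n ≤ m) (y : N (d n)),
      φ (c n) (c m) (hcm h) (F m (ψ (d n) (d m) (hdm h) y)) = F n y := by
    intro n m h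
    induction m, h using Nat.le_induction with
    | base =>
      intro y
      rw [Module.DirectedSystem.map_self ψ, hφid (c n)]
      rfl
    | succ m hm ih =>
      intro y
      rw [show (hdm (Nat.le_succ_of_le hm) : d n ≤ d (m+1)) =
        (hdm hm).trans (hdm (Nat.le_succ m)) from rfl]
      rw [← Module.DirectedSystem.map_map ψ (hdm hm) (hdm (Nat.le_succ m)) y]
      rw [← hφcomp (c n) (c m) (c (m+1)) (hcm hm) (hcm (Nat.le_succ m))]
      rw [LinearMap.comp_apply, hF m, ih]
  -- independence of the stage used to compute components
  have key : ∀ n m₁ m₂ (h1 : n ≤ m₁) (h12 : m₁ ≤ m₂) (i : ι) (hi : i ≤ c m₁) (y : N (d n)),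
      φ i (c m₁) hi (F m₁ (ψ (d n) (d m₁) (hdm h1) y)) =
      φ i (c m₂) (hi.trans (hcm h12)) (F m₂ (ψ (d n) (d m₂) (hdm (h1.trans h12)) y)) := by
    intro n m₁ m₂ h1 h12 i hi y
    rw [← hFc m₁ m₂ h12 (ψ (d n) (d m₁) (hdm h1) y),
      Module.DirectedSystem.map_map ψ,
      ← LinearMap.comp_apply, hφcomp]
  choose kι hkι using hccof
  choose kJ hkJ using hdcof
  let X : ∀ n, N (d n) → ∀ i, M i := fun n y i =>
    φ i (c (max n (kι i))) ((hkι i).trans (hcm (le_max_right n (kι i))))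
      (F (max n (kι i)) (ψ (d n) (d (max n (kι i))) (hdm (le_max_left n (kι i))) y))
  have hXval : ∀ n y i m (hnm : n ≤ m) (him : i ≤ c m),
      X n y i = φ i (c m) him (F m (ψ (d n) (d m) (hdm hnm) y)) := by
    intro n y i m hnm him
    have h1 := key n (max n (kι i)) (max (max n (kι i)) m) (le_max_left _ _)
      (le_max_left _ _) i ((hkι i).trans (hcm (le_max_right n (kι i)))) y
    have h2 := key n m (max (max n (kι i)) m) hnm (le_max_right _ _) i him y
    exact h1.trans h2.symm
  have hXmem : ∀ n y, X n y ∈ invLim M φ := by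
    intro n y i j hij
    have hi : i ≤ c (max (max n (kι i)) (max n (kι j))) :=
      (hkι i).trans (hcm ((le_max_right _ _).trans (le_max_left _ _)))
    have hj : j ≤ c (max (max n (kι i)) (max n (kι j))) :=
      (hkι j).trans (hcm ((le_max_right _ _).trans (le_max_right _ _)))
    have hnm : n ≤ max (max n (kι i)) (max n (kι j)) :=
      (le_max_left _ _).trans (le_max_left _ _)
    rw [hXval n y i _ hnm hi, hXval n y j _ hnm hj, ← LinearMap.comp_apply, hφcomp]
  have hXadd : ∀ n y z, X n (y + z) = X n y + X n z := by
    intro n y z; funext i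
    simp only [X, map_add, Pi.add_apply]
  have hXsmul : ∀ n (r : R) y, X n (r • y) = r • X n y := by
    intro n r y; funext i
    simp only [X, map_smul, Pi.smul_apply]
  let G : ∀ n, N (d n) →ₗ[R] ↥(invLim M φ) := fun n =>
    { toFun := fun y => ⟨X n y, hXmem n y⟩
      map_add' := fun y z => Subtype.ext (hXadd n y z)
      map_smul' := fun r y => Subtype.ext (hXsmul n r y) }
  have hGval : ∀ n y i, ((G n y : ↥(invLim M φ)) : ∀ i, M i) i = X n y i := fun _ _ _ => rfl
  have hG : ∀ n m (h : n ≤ m) y, G m (ψ (d n) (d m) (hdm h) y) = G n y := by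
    intro n m h y
    apply Subtype.ext; funext i
    have hi : i ≤ c (max m (kι i)) := (hkι i).trans (hcm (le_max_right _ _))
    show X m (ψ (d n) (d m) (hdm h) y) i = X n y i
    rw [hXval m _ i (max m (kι i)) (le_max_left _ _) hi,
      hXval n y i (max m (kι i)) (h.trans (le_max_left _ _)) hi,
      Module.DirectedSystem.map_map ψ]
  let H : ∀ j : J, N j →ₗ[R] ↥(invLim M φ) := fun j =>
    (G (kJ j)).comp (ψ j (d (kJ j)) (hkJ j))
  have hH : ∀ (j k : J) (hjk : j ≤ k) (y : N j), H k (ψ j k hjk y) = H j y := by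
    intro j k hjk y
    show G (kJ k) (ψ k (d (kJ k)) (hkJ k) (ψ j k hjk y)) =
      G (kJ j) (ψ j (d (kJ j)) (hkJ j) y)
    rw [← hG (kJ k) (max (kJ j) (kJ k)) (le_max_right _ _),
      ← hG (kJ j) (max (kJ j) (kJ k)) (le_max_left _ _),
      Module.DirectedSystem.map_map ψ, Module.DirectedSystem.map_map ψ,
      Module.DirectedSystem.map_map ψ]
  refine ⟨Module.DirectLimit.lift R J N ψ H hH, ?_⟩
  ext y
  simp only [LinearMap.comp_apply, Module.DirectLimit.lift_of]
  show X (kJ (d 0)) (ψ (d 0) (d (kJ (d 0))) (hkJ (d 0)) y) (c 0) = f y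
  rw [hXval (kJ (d 0)) _ (c 0) (max (kJ (d 0)) 0) (le_max_left _ _) (hcm (Nat.zero_le _)),
    Module.DirectedSystem.map_map ψ]
  exact hFc 0 (max (kJ (d 0)) 0) (Nat.zero_le _) y
end

section
/- Let $M$ be the inverse limit of a countable directed system of injective (equivalently, divisible) abelian groups $M_\alpha$ with surjective transition maps, and let $M_{\mathrm{div}}$ be the largest divisible subgroup of $M$ (the sum of the images of all group homomorphisms $\mathbb{Q} \to M$). Then for each index $\alpha$, the composite $M_{\mathrm{div}} \hookrightarrow M \to M_\alpha$ is surjective. -/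
namespace DivPartAux

/-- ratio `(n+1)(n+2)⋯m` as an integer. -/
def r (n m : ℕ) : ℤ := ∏ x ∈ Finset.Ioc n m, (x : ℤ)

/-- A division chain: `c n = (n+1) • c (n+1)` for all `n`. -/
def IsDivChain {G : Type*} [AddCommGroup G] (c : ℕ → G) : Prop :=
  ∀ n : ℕ, ((n : ℤ) + 1) • c (n + 1) = c n

lemma r_self (n : ℕ) : r n n = 1 := by simp [r]

lemma r_succ {n m : ℕ} (h : n ≤ m) : r n (m + 1) = r n m * ((m : ℤ) + 1) := by
  rw [r, r, Finset.prod_Ioc_succ_top h]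
  push_cast; ring

lemma r_left {n m : ℕ} (h : n < m) : r n m = ((n : ℤ) + 1) * r (n + 1) m := by
  rw [r, r, ← Finset.prod_Ioc_consecutive _ (Nat.le_succ n) h]
  rw [Nat.Ioc_succ_singleton, Finset.prod_singleton]; push_cast; ring

lemma chain_eq {G : Type*} [AddCommGroup G] {c : ℕ → G} (hc : IsDivChain c)
    {n m : ℕ} (h : n ≤ m) : c n = r n m • c m := by
  induction m, h using Nat.le_induction with
  | base => simp [r_self]
  | succ m hm ih =>
      rw [ih, r_succ hm, mul_smul, hc m]

lemma exists_chain_through {G : Type*} [AddCommGroup G]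
    (hdiv : ∀ n : ℤ, n ≠ 0 → Function.Surjective (fun y : G => n • y))
    (k : ℕ) (g : G) : ∃ c : ℕ → G, IsDivChain c ∧ c k = g := by
  have hd : ∀ (j : ℕ) (x : G), ∃ y, (((k + j : ℕ) : ℤ) + 1) • y = x := by
    intro j x
    exact hdiv _ (by positivity) x
  let t : ℕ → G := fun j => Nat.rec g (fun j tj => Classical.choose (hd j tj)) j
  have ht : ∀ j, (((k + j : ℕ) : ℤ) + 1) • t (j + 1) = t j := fun j =>
    Classical.choose_spec (hd j (t j))
  refine ⟨fun n => if h : k ≤ n then t (n - k) else r n k • g, ?_, by simp [t]⟩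
  intro n
  rcases le_or_gt k n with h | h
  · have h1 : k ≤ n + 1 := by omega
    have := ht (n - k)
    have e1 : k + (n - k) = n := by omega
    have e2 : n - k + 1 = n + 1 - k := by omega
    rw [e1, e2] at this
    simp only [dif_pos h, dif_pos h1, this]
  · rcases eq_or_lt_of_le (Nat.succ_le_of_lt h) with h2 | h2
    · -- k = n + 1
      have h1 : k ≤ n + 1 := by omega
      simp only [dif_pos h1, dif_neg (not_le.mpr h)]
      have : n + 1 - k = 0 := by omega
      rw [this]
      show ((n : ℤ) + 1) • g = r n k • g
      rw [← h2, r_succ (le_refl n), r_self, one_mul]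
    · have h1 : ¬ k ≤ n + 1 := by omega
      simp only [dif_neg (not_le.mpr h), dif_neg h1]
      rw [r_left h, mul_smul, smul_comm]

lemma step_lift {G H : Type*} [AddCommGroup G] [AddCommGroup H] (ψ : H →ₗ[ℤ] G)
    (hψ : Function.Surjective ψ)
    (hdivH : ∀ n : ℤ, n ≠ 0 → Function.Surjective (fun y : H => n • y))
    (k : ℕ) (c : ℕ → G) (hc : IsDivChain c) :
    ∃ d : ℕ → H, IsDivChain d ∧ ∀ n ≤ k, ψ (d n) = c n := by
  obtain ⟨e, he⟩ := hψ (c k)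
  obtain ⟨d, hd, hdk⟩ := exists_chain_through hdivH k e
  refine ⟨d, hd, fun n hn => ?_⟩
  rw [chain_eq hd hn, hdk, map_zsmul, he, ← chain_eq hc hn]


/-- the integer `q * n!` (meaningful when `q.den ∣ n!`). -/
def intOf (q : ℚ) (n : ℕ) : ℤ := q.num * ((n.factorial : ℤ) / (q.den : ℤ))

lemma mul_den_eq_num (q : ℚ) : q * (q.den : ℚ) = (q.num : ℚ) := by
  have hden : ((q.den : ℚ)) ≠ 0 := by exact_mod_cast q.den_nz
  have h := Rat.num_div_den q
  calc q * (q.den : ℚ) = ((q.num : ℚ) / (q.den : ℚ)) * (q.den : ℚ) := by rw [h]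
    _ = (q.num : ℚ) := div_mul_cancel₀ _ hden

lemma intOf_cast {q : ℚ} {n : ℕ} (h : (q.den : ℤ) ∣ (n.factorial : ℤ)) :
    ((intOf q n : ℤ) : ℚ) = q * (n.factorial : ℚ) := by
  obtain ⟨m, hm⟩ := h
  have hden : (q.den : ℤ) ≠ 0 := by exact_mod_cast q.den_nz
  have hfac : ((n.factorial : ℚ)) = (q.den : ℚ) * (m : ℚ) := by exact_mod_cast hm
  rw [intOf, hm, Int.mul_ediv_cancel_left _ hden, hfac, ← mul_assoc, mul_den_eq_num]
  push_cast
  ring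

lemma dvd_fac_succ {q : ℚ} {n : ℕ} (h : (q.den : ℤ) ∣ (n.factorial : ℤ)) :
    (q.den : ℤ) ∣ ((n+1).factorial : ℤ) := by
  refine h.trans ?_
  exact_mod_cast Nat.factorial_dvd_factorial (Nat.le_succ n)

lemma intOf_succ {q : ℚ} {n : ℕ} (h : (q.den : ℤ) ∣ (n.factorial : ℤ)) :
    intOf q (n + 1) = intOf q n * ((n : ℤ) + 1) := by
  have : ((intOf q (n+1) : ℤ) : ℚ) = ((intOf q n * ((n:ℤ)+1) : ℤ) : ℚ) := by
    rw [Int.cast_mul, intOf_cast (dvd_fac_succ h), intOf_cast h]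
    push_cast [Nat.factorial_succ]
    ring
  exact_mod_cast this

lemma F_stab {G : Type*} [AddCommGroup G] {c : ℕ → G} (hc : IsDivChain c)
    {q : ℚ} {n m : ℕ} (h : (q.den : ℤ) ∣ (n.factorial : ℤ)) (hnm : n ≤ m) :
    intOf q n • c n = intOf q m • c m := by
  induction m, hnm using Nat.le_induction with
  | base => rfl
  | succ m hm ih =>
      have hm' : (q.den : ℤ) ∣ (m.factorial : ℤ) := by
        refine h.trans ?_
        exact_mod_cast Nat.factorial_dvd_factorial hm
      rw [ih, intOf_succ hm', mul_smul, hc m]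

lemma den_dvd_fac {q : ℚ} {n : ℕ} (h : q.den ≤ n) : (q.den : ℤ) ∣ (n.factorial : ℤ) :=
  Int.natCast_dvd_natCast.mpr (Nat.dvd_factorial q.pos h)

/-- The homomorphism `ℚ →+ G` associated to a division chain. -/
noncomputable def chainHom {G : Type*} [AddCommGroup G] (c : ℕ → G) (hc : IsDivChain c) :
    ℚ →+ G :=
  AddMonoidHom.mk' (fun q => intOf q q.den • c q.den) (by
    intro q q'
    show intOf (q + q') (q + q').den • c (q + q').den =
        intOf q q.den • c q.den + intOf q' q'.den • c q'.den
    have hd : ∀ x : ℚ, (x.den : ℤ) ∣ (x.den.factorial : ℤ) :=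
      fun x => den_dvd_fac le_rfl
    set N := q.den + q'.den + (q + q').den with hN
    have h1 : (q.den : ℤ) ∣ (N.factorial : ℤ) := den_dvd_fac (by omega)
    have h2 : (q'.den : ℤ) ∣ (N.factorial : ℤ) := den_dvd_fac (by omega)
    have h3 : ((q + q').den : ℤ) ∣ (N.factorial : ℤ) := den_dvd_fac (by omega)
    rw [F_stab hc (hd (q + q')) (show (q+q').den ≤ N by omega),
        F_stab hc (hd q) (show q.den ≤ N by omega),
        F_stab hc (hd q') (show q'.den ≤ N by omega)]
    have key : intOf (q + q') N = intOf q N + intOf q' N := by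
      have : ((intOf (q + q') N : ℤ) : ℚ) = ((intOf q N + intOf q' N : ℤ) : ℚ) := by
        rw [intOf_cast h3]
        push_cast [intOf_cast h1, intOf_cast h2]
        ring
      exact_mod_cast this
    rw [key, add_smul])

lemma chainHom_one {G : Type*} [AddCommGroup G] (c : ℕ → G) (hc : IsDivChain c) :
    chainHom c hc 1 = c 0 := by
  show intOf 1 (1:ℚ).den • c (1:ℚ).den = c 0
  have h : ((1:ℚ).den : ℤ) ∣ ((0:ℕ).factorial : ℤ) := by norm_num
  rw [← F_stab hc h (by norm_num)]
  norm_num [intOf]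

lemma mem_iSup_range_of_chain {G : Type*} [AddCommGroup G] {c : ℕ → G} (hc : IsDivChain c) :
    c 0 ∈ ⨆ f : ℚ →+ G, f.range := by
  have : c 0 ∈ (chainHom c hc).range := ⟨1, chainHom_one c hc⟩
  exact (le_iSup (fun f : ℚ →+ G => f.range) (chainHom c hc)) this

end DivPartAux

universe u v

open DivPartAux in
/-- If `M` is the inverse limit of a countable directed system of divisible (injective)
abelian groups with surjective transition maps, then the largest divisible subgroup of
`M` (the sum of the images of all homomorphisms `ℚ → M`) maps onto each term `M_α`. -/
theorem divisible_part_surjects (ι : Type) [Preorder ι] [IsDirected ι (· ≤ ·)]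
    [Countable ι] [Nonempty ι]
    (M : ι → Type) [∀ i, AddCommGroup (M i)]
    (φ : ∀ i j : ι, i ≤ j → (M j →ₗ[ℤ] M i))
    (hφid : ∀ i, φ i i le_rfl = LinearMap.id)
    (hφcomp : ∀ (i j k : ι) (hij : i ≤ j) (hjk : j ≤ k),
      (φ i j hij).comp (φ j k hjk) = φ i k (hij.trans hjk))
    (hdiv : ∀ (i : ι) (n : ℤ), n ≠ 0 → Function.Surjective (fun y : M i => n • y))
    (hφsurj : ∀ (i j : ι) (h : i ≤ j), Function.Surjective (φ i j h)) :
    ∀ (a : ι) (y : M a), ∃ x : ↥(invLim M φ),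
      x ∈ (⨆ f : ℚ →+ ↥(invLim M φ), f.range) ∧ (x : ∀ i, M i) a = y := by
  intro a y
  -- a monotone cofinal sequence
  obtain ⟨e, he⟩ := exists_surjective_nat ι
  have hstep : ∀ (j : ι) (k : ℕ), ∃ l : ι, j ≤ l ∧ e k ≤ l := fun j k =>
    directed_of (· ≤ ·) j (e k)
  let s : ℕ → ι := fun k => Nat.rec (e 0) (fun k sk => Classical.choose (hstep sk (k + 1))) k
  have hs1 : ∀ k, s k ≤ s (k + 1) := fun k => (Classical.choose_spec (hstep (s k) (k + 1))).1
  have hs2 : ∀ k, e k ≤ s k := by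
    intro k
    cases k with
    | zero => exact le_rfl
    | succ k => exact (Classical.choose_spec (hstep (s k) (k + 1))).2
  have hsmono : Monotone s := monotone_nat_of_le_succ hs1
  have hcof : ∀ j : ι, ∃ k, j ≤ s k := fun j => by
    obtain ⟨k, hk⟩ := he j
    exact ⟨k, hk ▸ hs2 k⟩
  obtain ⟨k0, hk0⟩ := hcof a
  set i : ℕ → ι := fun k => s (k0 + k) with hi
  have himono : ∀ {k l : ℕ}, k ≤ l → i k ≤ i l := fun h => hsmono (by omega)
  have hicof : ∀ j : ι, ∃ k, j ≤ i k := fun j => by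
    obtain ⟨k, hk⟩ := hcof j
    exact ⟨k, hk.trans (hsmono (by omega))⟩
  have ha0 : a ≤ i 0 := by simpa [hi] using hk0
  -- composition helper
  have hcomb : ∀ (j : ι) (k l : ℕ) (h : j ≤ i k) (hkl : k ≤ l) (x : M (i l)),
      φ j (i k) h (φ (i k) (i l) (himono hkl) x) = φ j (i l) (h.trans (himono hkl)) x :=
    fun j k l h hkl x => DFunLike.congr_fun (hφcomp j (i k) (i l) h (himono hkl)) x
  -- base column
  obtain ⟨z0, hz0⟩ := hφsurj a (i 0) ha0 y
  obtain ⟨c0, hc0, hc00⟩ := exists_chain_through (hdiv (i 0)) 0 z0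
  -- the columns
  have hex : ∀ (k : ℕ) (c : ℕ → M (i k)), IsDivChain c → ∃ d : ℕ → M (i (k + 1)),
      IsDivChain d ∧ ∀ n ≤ k, φ (i k) (i (k + 1)) (himono (Nat.le_succ k)) (d n) = c n :=
    fun k c hc => step_lift _ (hφsurj _ _ _) (hdiv _) k c hc
  let col : ∀ k : ℕ, {c : ℕ → M (i k) // IsDivChain c} := fun k =>
    Nat.rec ⟨c0, hc0⟩ (fun k prev => ⟨Classical.choose (hex k prev.1 prev.2),
      (Classical.choose_spec (hex k prev.1 prev.2)).1⟩) k
  have hcompat : ∀ k, ∀ n ≤ k,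
      φ (i k) (i (k + 1)) (himono (Nat.le_succ k)) ((col (k + 1)).1 n) = (col k).1 n :=
    fun k => (Classical.choose_spec (hex k (col k).1 (col k).2)).2
  have hpush : ∀ (n k l : ℕ) (hkl : k ≤ l), n ≤ k →
      φ (i k) (i l) (himono hkl) ((col l).1 n) = (col k).1 n := by
    intro n k l hkl hn
    induction l, hkl using Nat.le_induction with
    | base =>
        show φ (i k) (i k) le_rfl ((col k).1 n) = (col k).1 n
        rw [hφid]; rfl
    | succ l hl ih =>
        show φ (i k) (i (l + 1)) ((himono hl).trans (himono (Nat.le_succ l)))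
          ((col (l + 1)).1 n) = (col k).1 n
        rw [← hcomb (i k) l (l + 1) (himono hl) (Nat.le_succ l),
          hcompat l n (hn.trans hl), ih]
  -- the components
  choose N hN using hicof
  let K : ℕ → ι → ℕ := fun n j => max (N j) n
  have hjK : ∀ (n : ℕ) (j : ι), j ≤ i (K n j) := fun n j =>
    (hN j).trans (himono (le_max_left _ _))
  let xc : ℕ → ∀ j, M j := fun n j => φ j (i (K n j)) (hjK n j) ((col (K n j)).1 n)
  have hwd : ∀ (n : ℕ) (j : ι) (k : ℕ) (h : j ≤ i k), n ≤ k →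
      φ j (i k) h ((col k).1 n) = xc n j := by
    intro n j k h hn
    have h1 : k ≤ max k (K n j) := le_max_left _ _
    have h2 : K n j ≤ max k (K n j) := le_max_right _ _
    have e1 : φ j (i k) h ((col k).1 n)
        = φ j (i (max k (K n j))) (h.trans (himono h1)) ((col (max k (K n j))).1 n) := by
      rw [← hpush n k (max k (K n j)) h1 hn, hcomb j k (max k (K n j)) h h1]
    have e2 : xc n j
        = φ j (i (max k (K n j))) ((hjK n j).trans (himono h2)) ((col (max k (K n j))).1 n) := by
      show φ j (i (K n j)) (hjK n j) ((col (K n j)).1 n) = _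
      rw [← hpush n (K n j) (max k (K n j)) h2 (le_max_right _ _),
        hcomb j (K n j) (max k (K n j)) (hjK n j) h2]
    rw [e1, e2]
  have hmem : ∀ n, xc n ∈ invLim M φ := by
    intro n j j' hjj'
    have hc := DFunLike.congr_fun (hφcomp j j' (i (K n j')) hjj' (hjK n j'))
      ((col (K n j')).1 n)
    calc φ j j' hjj' (xc n j')
        = φ j (i (K n j')) (hjj'.trans (hjK n j')) ((col (K n j')).1 n) := hc
      _ = xc n j := hwd n j _ _ (le_max_right _ _)
  let xs : ℕ → ↥(invLim M φ) := fun n => ⟨xc n, hmem n⟩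
  have hxchain : IsDivChain xs := by
    intro n
    apply Subtype.ext
    have : (((((n : ℤ) + 1) • xs (n + 1)) : ↥(invLim M φ)) : ∀ j, M j)
        = ((n : ℤ) + 1) • (xc (n + 1)) := rfl
    rw [this]
    funext j
    show ((n : ℤ) + 1) • xc (n + 1) j = xc n j
    have : ((n : ℤ) + 1) • xc (n + 1) j
        = φ j (i (K (n + 1) j)) (hjK (n + 1) j) (((n : ℤ) + 1) • (col (K (n + 1) j)).1 (n + 1)) := by
      rw [map_zsmul]
    rw [this, (col (K (n + 1) j)).2 n]
    exact hwd n j (K (n + 1) j) (hjK (n + 1) j) (le_trans (Nat.le_succ n) (le_max_right _ _))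
  refine ⟨xs 0, mem_iSup_range_of_chain hxchain, ?_⟩
  show xc 0 a = y
  rw [← hwd 0 a 0 ha0 le_rfl]
  show φ a (i 0) ha0 (c0 0) = y
  rw [hc00]
  exact hz0
end

section
/- Let $R$ be a ring, $\mathbf{M}$ a class of left $R$-modules closed under arbitrary direct sums, and $0 \to A \to M \to N$ an exact sequence with $M, N \in \mathbf{M}$. Then $A$ can be written as the inverse limit of an $\omega_1$-indexed system of modules in $\mathbf{M}$ with surjective transition maps, provided there exists an $\omega_1$-indexed inverse system of nonempty sets with surjective transition maps and empty inverse limit. -/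
universe u v

open Finsupp

section SumVal

variable {R : Type} [Ring R] {N : Type} [AddCommGroup N] [Module R N]

noncomputable def sumVal (ι : Type) : (ι →₀ N) →ₗ[R] N :=
  Finsupp.lsum ℕ fun _ => LinearMap.id

theorem sumVal_apply (ι : Type) (v : ι →₀ N) :
    sumVal (R := R) ι v = v.sum fun _ x => x := by
  rw [sumVal, Finsupp.lsum_apply]; rfl

theorem sumVal_mapDomain {ι κ : Type} (e : ι → κ) (v : ι →₀ N) :
    sumVal (R := R) κ (Finsupp.mapDomain e v) = sumVal (R := R) ι v := by
  rw [sumVal_apply, sumVal_apply]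
  exact Finsupp.sum_mapDomain_index (fun _ => rfl) (fun _ _ _ => rfl)

theorem sumVal_embDomain {ι κ : Type} (e : ι ↪ κ) (v : ι →₀ N) :
    sumVal (R := R) κ (Finsupp.embDomain e v) = sumVal (R := R) ι v := by
  rw [sumVal_apply, sumVal_apply]
  exact Finsupp.sum_embDomain

theorem sumVal_single {ι : Type} (i : ι) (x : N) :
    sumVal (R := R) ι (Finsupp.single i x) = x := by
  rw [sumVal_apply]
  exact Finsupp.sum_single_index rfl

end SumVal

section Split

variable {R : Type} [Ring R] {M N : Type} [AddCommGroup M] [Module R M]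
  [AddCommGroup N] [Module R N]

/-- the inclusion embedding of `{s // s ≠ p}` -/
def neEmb {ι : Type} (p : ι) : {s : ι // s ≠ p} ↪ ι := ⟨Subtype.val, Subtype.val_injective⟩

theorem split_eq {ι : Type} (p : ι) (n : ι →₀ N) :
    n = Finsupp.embDomain (neEmb p) (n.subtypeDomain (· ≠ p)) + Finsupp.single p (n p) := by
  classical
  ext s
  by_cases hs : s = p
  · subst hs
    rw [Finsupp.add_apply, Finsupp.embDomain_notin_range, Finsupp.single_eq_same, zero_add]
    rintro ⟨⟨t, ht⟩, h⟩
    exact ht h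
  · have : s = (neEmb p) ⟨s, hs⟩ := rfl
    rw [Finsupp.add_apply, Finsupp.single_eq_of_ne' (Ne.symm hs), add_zero, this,
      Finsupp.embDomain_apply_self]
    rfl

theorem sumVal_split {ι : Type} (p : ι) (n : ι →₀ N) :
    sumVal (R := R) ι n
      = sumVal (R := R) _ (n.subtypeDomain (· ≠ p)) + n p := by
  conv_lhs => rw [split_eq p n]
  rw [map_add, sumVal_embDomain, sumVal_single]

variable (f : M →ₗ[R] N)

/-- the map `(m, n) ↦ f m - Σ n` -/
noncomputable def dMap (ι : Type) : (M × (ι →₀ N)) →ₗ[R] N :=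
  f.comp (LinearMap.fst R M (ι →₀ N)) - (sumVal ι).comp (LinearMap.snd R M (ι →₀ N))

/-- the submodule of pairs `(m, n)` with `f m = Σ n`. -/
noncomputable def QSub (ι : Type) : Submodule R (M × (ι →₀ N)) :=
  LinearMap.ker (dMap f ι)

theorem mem_QSub {ι : Type} (x : M × (ι →₀ N)) :
    x ∈ QSub f ι ↔ f x.1 = sumVal (R := R) ι x.2 := by
  simp [QSub, dMap, sub_eq_zero, LinearMap.sub_apply]

end Split

section SplitEquiv

variable {R : Type} [Ring R] {M N : Type} [AddCommGroup M] [Module R M]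
  [AddCommGroup N] [Module R N] (f : M →ₗ[R] N)

/-- restriction to the complement of a point, as a linear map -/
noncomputable def lsubNe {ι : Type} (p : ι) : (ι →₀ N) →ₗ[R] ({s : ι // s ≠ p} →₀ N) where
  toFun := Finsupp.subtypeDomain (· ≠ p)
  map_add' _ _ := Finsupp.subtypeDomain_add
  map_smul' _ _ := Finsupp.ext fun _ => rfl

theorem lsubNe_embDomain {ι : Type} (p : ι) (ν : {s : ι // s ≠ p} →₀ N) :
    lsubNe (R := R) p (Finsupp.embDomain (neEmb p) ν) = ν := by
  ext ⟨s, hs⟩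
  exact Finsupp.embDomain_apply_self (neEmb p) ν ⟨s, hs⟩

theorem lsubNe_single {ι : Type} (p : ι) (x : N) :
    lsubNe (R := R) p (Finsupp.single p x) = 0 := by
  ext ⟨s, hs⟩
  show (Finsupp.single p x) s = 0
  exact Finsupp.single_eq_of_ne' (Ne.symm hs)

noncomputable def splitEquiv (ι : Type) (p : ι) :
    ↥(QSub f ι) ≃ₗ[R] M × ({s : ι // s ≠ p} →₀ N) := by
  refine LinearEquiv.ofBijective
    (((LinearMap.fst R M (ι →₀ N)).comp (QSub f ι).subtype).prod
      ((lsubNe p).comp ((LinearMap.snd R M (ι →₀ N)).comp (QSub f ι).subtype))) ⟨?_, ?_⟩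
  · intro x y hxy
    obtain ⟨⟨mx, nx⟩, hx⟩ := x
    obtain ⟨⟨my, ny⟩, hy⟩ := y
    simp only [LinearMap.prod_apply, LinearMap.comp_apply, Submodule.subtype_apply,
      Prod.mk.injEq, Pi.prod, Prod.ext_iff] at hxy
    obtain ⟨h1, h2⟩ := hxy
    dsimp at h1 h2
    apply Subtype.ext
    rw [mem_QSub] at hx hy
    dsimp at hx hy
    have hsum : sumVal (R := R) ι nx = sumVal (R := R) ι ny := by rw [← hx, ← hy, h1]
    rw [sumVal_split p nx, sumVal_split p ny] at hsum
    have hval : nx p = ny p := by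
      have := congrArg (sumVal (R := R) _) h2
      change sumVal (R := R) _ (Finsupp.subtypeDomain _ nx)
        = sumVal (R := R) _ (Finsupp.subtypeDomain _ ny) at this
      rw [this] at hsum
      exact add_left_cancel hsum
    have : nx = ny := by
      rw [split_eq p nx, split_eq p ny, hval]
      congr 1
      exact congrArg _ h2
    exact Prod.ext h1 this
  · rintro ⟨m, ν⟩
    refine ⟨⟨(m, Finsupp.embDomain (neEmb p) ν
      + Finsupp.single p (f m - sumVal (R := R) _ ν)), ?_⟩, ?_⟩
    · rw [mem_QSub]
      dsimp
      rw [map_add, sumVal_embDomain, sumVal_single]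
      abel
    · simp only [LinearMap.prod_apply, LinearMap.comp_apply, Submodule.subtype_apply, Pi.prod]
      dsimp
      rw [map_add, lsubNe_embDomain, lsubNe_single, add_zero]

end SplitEquiv

section Stab

theorem omega1_countable_bounded (b : ℕ → Omega1) : ∃ ub : Omega1, ∀ k, b k ≤ ub := by
  have hlt : ∀ k, (b k).1 < (Cardinal.aleph 1).ord := fun k => (b k).2
  have hsup : (⨆ k, (b k).1) < (Cardinal.aleph 1).ord := by
    apply Ordinal.iSup_lt_ord
    · rw [Cardinal.isRegular_aleph_one.cof_eq, Cardinal.mk_nat]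
      exact Cardinal.aleph0_lt_aleph_one
    · exact hlt
  exact ⟨⟨_, hsup⟩, fun k => Ordinal.le_iSup (fun k => (b k).1) k⟩

theorem omega1_finset_stab {γ : Type} (D : Omega1 → Finset γ)
    (hmono : ∀ a b, a ≤ b → D a ⊆ D b) : ∃ b, ∀ c, b ≤ c → D c = D b := by
  by_contra h
  push_neg at h
  have grow : ∀ b, ∃ c, b ≤ c ∧ (D b).card < (D c).card := by
    intro b
    obtain ⟨c, hbc, hne⟩ := h b
    exact ⟨c, hbc, Finset.card_lt_card (lt_of_le_of_ne (hmono b c hbc) (Ne.symm hne))⟩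
  choose nx hle hcard using grow
  obtain ⟨e0⟩ : Nonempty Omega1 := ⟨⟨0, by
    rw [Cardinal.lt_ord, Ordinal.card_zero]
    exact lt_of_lt_of_le Cardinal.aleph0_pos Cardinal.aleph0_lt_aleph_one.le⟩⟩
  set seq : ℕ → Omega1 := fun k => nx^[k] e0 with hseq
  have hgrow : ∀ k, k ≤ (D (seq k)).card := by
    intro k
    induction k with
    | zero => exact Nat.zero_le _
    | succ k ih =>
      have : seq (k + 1) = nx (seq k) := Function.iterate_succ_apply' nx k e0
      rw [this]
      exact Nat.succ_le_of_lt (lt_of_le_of_lt ih (hcard (seq k)))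
  obtain ⟨ub, hub⟩ := omega1_countable_bounded seq
  have : ∀ k, k ≤ (D ub).card := fun k =>
    le_trans (hgrow k) (Finset.card_le_card (hmono _ _ (hub k)))
  exact absurd (this ((D ub).card + 1)) (by omega)

end Stab

section Vanish

open CategoryTheory

theorem compat_vanish {N : Type} [AddCommGroup N]
    (S : Omega1 → Type) (Sf : ∀ a b : Omega1, a ≤ b → S b → S a)
    (hid : ∀ (a : Omega1) (x : S a), Sf a a le_rfl x = x)
    (hcomp : ∀ (a b c : Omega1) (hab : a ≤ b) (hbc : b ≤ c) (x : S c),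
      Sf a b hab (Sf b c hbc x) = Sf a c (hab.trans hbc) x)
    (hempty : IsEmpty {x : ∀ a, S a // ∀ (a b : Omega1) (h : a ≤ b), Sf a b h (x b) = x a})
    (n : ∀ a, S a →₀ N)
    (hcpt : ∀ (a b : Omega1) (h : a ≤ b), Finsupp.mapDomain (Sf a b h) (n b) = n a) :
    ∀ a, n a = 0 := by
  classical
  by_contra hx
  push_neg at hx
  obtain ⟨a₀, ha₀⟩ := hx
  have hnz : ∀ b, a₀ ≤ b → (n b).support.Nonempty := by
    intro b h
    rw [Finsupp.support_nonempty_iff]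
    intro h0
    exact ha₀ (by rw [← hcpt a₀ b h, h0, Finsupp.mapDomain_zero])
  set E : ∀ a : Omega1, Omega1 → Finset (S a) :=
    fun a b => if h : a ≤ b then (n b).support.image (Sf a b h) else ∅ with hE
  have hmono : ∀ (a b c : Omega1), a ≤ b → b ≤ c → E a b ⊆ E a c := by
    intro a b c hab hbc s hs
    simp only [hE, dif_pos hab] at hs
    simp only [hE, dif_pos (hab.trans hbc)]
    simp only [Finset.mem_image] at hs ⊢
    obtain ⟨t, ht, rfl⟩ := hs
    have ht' : t ∈ (Finsupp.mapDomain (Sf b c hbc) (n c)).support := by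
      rw [hcpt b c hbc]; exact ht
    obtain ⟨u, hu, rfl⟩ := Finset.mem_image.mp (Finsupp.mapDomain_support ht')
    exact ⟨u, hu, (hcomp a b c hab hbc u).symm⟩
  have key : ∀ a : Omega1, ∃ b, a ≤ b ∧ a₀ ≤ b ∧ ∀ c, b ≤ c → E a c = E a b := by
    intro a
    set m₀ := max a a₀ with hm₀
    have ham : a ≤ m₀ := le_max_left _ _
    obtain ⟨b, hb⟩ := omega1_finset_stab (fun c => E a (max c m₀))
      (fun c c' hcc => hmono a (max c m₀) (max c' m₀) (ham.trans (le_max_right _ _))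
        (max_le_max hcc le_rfl))
    refine ⟨max b m₀, ham.trans (le_max_right _ _),
      (le_max_right a a₀).trans ((le_max_right b m₀).trans le_rfl), ?_⟩
    intro c hc
    have hcm : max c m₀ = c := max_eq_left ((le_max_right b m₀).trans hc)
    have h1 : E a c = E a (max c m₀) := by rw [hcm]
    have h2 : E a (max b m₀) = E a (max (max b m₀) m₀) := by
      exact congrArg (E a) (max_eq_left (le_max_right b m₀)).symm
    rw [h1, h2]
    rw [hb c ((le_max_left b m₀).trans hc), hb (max b m₀) (le_max_left b m₀)]
  choose B hB1 hB2 hB3 using key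
  have hFne : ∀ a, (E a (B a)).Nonempty := by
    intro a
    simp only [hE, dif_pos (hB1 a)]
    exact (hnz (B a) (hB2 a)).image _
  have hFmap : ∀ (a b : Omega1) (h : a ≤ b), ∀ s ∈ E b (B b), Sf a b h s ∈ E a (B a) := by
    intro a b h s hs
    set c := max (B a) (B b) with hc
    have hbc : B b ≤ c := le_max_right _ _
    have hac : B a ≤ c := le_max_left _ _
    rw [← hB3 b c hbc] at hs
    rw [← hB3 a c hac]
    have hbc' : b ≤ c := (hB1 b).trans hbc
    have hac' : a ≤ c := (hB1 a).trans hac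
    simp only [hE, dif_pos hbc'] at hs
    simp only [hE, dif_pos hac']
    obtain ⟨t, ht, rfl⟩ := Finset.mem_image.mp hs
    exact Finset.mem_image.mpr ⟨t, ht, (hcomp a b c h hbc' t).symm⟩
  let Fct : Omega1ᵒᵖ ⥤ Type := {
    obj := fun j => {s : S j.unop // s ∈ E j.unop (B j.unop)}
    map := fun {j k} φ => TypeCat.ofHom fun s => ⟨Sf k.unop j.unop (leOfHom φ.unop) s.1,
      hFmap k.unop j.unop (leOfHom φ.unop) s.1 s.2⟩
    map_id := fun j => by ext s; exact hid j.unop s.1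
    map_comp := fun {i j k} φ₁ φ₂ => by
      ext s
      exact ((hcomp k.unop j.unop i.unop (leOfHom φ₂.unop) (leOfHom φ₁.unop) s.1).symm) }
  haveI : ∀ j : Omega1ᵒᵖ, Finite (Fct.obj j) :=
    fun j => @Finite.of_fintype _ (Finset.fintypeCoeSort _)
  haveI : ∀ j : Omega1ᵒᵖ, Nonempty (Fct.obj j) := by
    intro j
    obtain ⟨s, hs⟩ := hFne j.unop
    exact ⟨⟨s, hs⟩⟩
  obtain ⟨u, hu⟩ := nonempty_sections_of_finite_inverse_system Fct
  refine hempty.false ⟨fun a => (u (Opposite.op a)).1, ?_⟩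
  intro a b h
  exact congrArg Subtype.val (@hu (Opposite.op b) (Opposite.op a) ((homOfLE h).op))

end Vanish

section Congr

variable {R : Type u} [Ring R] {ι : Type v} [Preorder ι]
  {Q P : ι → Type u} [∀ a, AddCommGroup (Q a)] [∀ a, Module R (Q a)]
  [∀ a, AddCommGroup (P a)] [∀ a, Module R (P a)]

noncomputable def invLimCongr (ψ : ∀ a b : ι, a ≤ b → (Q b →ₗ[R] Q a))
    (e : ∀ a, Q a ≃ₗ[R] P a) :
    ↥(invLim Q ψ) ≃ₗ[R]
      ↥(invLim P (fun a b h => ((e a).toLinearMap.comp (ψ a b h)).comp (e b).symm.toLinearMap)) where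
  toFun x := ⟨fun a => e a (x.1 a), by
    intro i j h
    simp only [LinearMap.comp_apply, LinearEquiv.coe_coe, LinearEquiv.symm_apply_apply]
    exact congrArg (e i) (x.2 i j h)⟩
  invFun y := ⟨fun a => (e a).symm (y.1 a), by
    intro i j h
    have h2 := y.2 i j h
    simp only [LinearMap.comp_apply, LinearEquiv.coe_coe] at h2
    have h3 := congrArg (e i).symm h2
    simpa using h3⟩
  map_add' x y := by
    apply Subtype.ext
    funext a
    exact map_add (e a) _ _
  map_smul' c x := by
    apply Subtype.ext
    funext a
    exact map_smul (e a) _ _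
  left_inv x := by
    apply Subtype.ext
    funext a
    simp
  right_inv y := by
    apply Subtype.ext
    funext a
    simp

end Congr

section OptionEquiv

variable {R : Type} [Ring R] {ι : Type} (α : Option ι → Type)
  [∀ i, AddCommGroup (α i)] [∀ i, Module R (α i)]

noncomputable def optionDFinsuppLEquiv :
    (Π₀ i, α i) ≃ₗ[R] α none × Π₀ i, α (some i) :=
  { DFinsupp.equivProdDFinsupp with
    map_add' := DFinsupp.equivProdDFinsupp_add
    map_smul' := fun r f => DFinsupp.equivProdDFinsupp_smul r f }

end OptionEquiv

instance inst_s11 : Nonempty Omega1 := ⟨⟨0, by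
  rw [Cardinal.lt_ord, Ordinal.card_zero]
  exact lt_of_lt_of_le Cardinal.aleph0_pos Cardinal.aleph0_lt_aleph_one.le⟩⟩

section System

variable {R : Type} [Ring R] {M N : Type} [AddCommGroup M] [Module R M]
  [AddCommGroup N] [Module R N] (f : M →ₗ[R] N)
  (S : Omega1 → Type) (Sf : ∀ a b : Omega1, a ≤ b → S b → S a)

noncomputable def PsiMap (a b : Omega1) (h : a ≤ b) :
    (M × (S b →₀ N)) →ₗ[R] (M × (S a →₀ N)) :=
  LinearMap.prodMap LinearMap.id (Finsupp.lmapDomain N R (Sf a b h))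

theorem PsiMap_apply (a b : Omega1) (h : a ≤ b) (x : M × (S b →₀ N)) :
    PsiMap (R := R) S Sf a b h x = (x.1, Finsupp.mapDomain (Sf a b h) x.2) := rfl

theorem PsiMap_mem (a b : Omega1) (h : a ≤ b) (x : M × (S b →₀ N))
    (hx : x ∈ QSub f (S b)) : PsiMap (R := R) S Sf a b h x ∈ QSub f (S a) := by
  rw [mem_QSub] at hx ⊢
  rw [PsiMap_apply]
  simpa [sumVal_mapDomain] using hx

noncomputable def psiMap (a b : Omega1) (h : a ≤ b) :
    ↥(QSub f (S b)) →ₗ[R] ↥(QSub f (S a)) :=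
  (PsiMap (R := R) S Sf a b h).restrict (fun x hx => PsiMap_mem f S Sf a b h x hx)

theorem psiMap_coe (a b : Omega1) (h : a ≤ b) (x : ↥(QSub f (S b))) :
    (psiMap f S Sf a b h x : M × (S a →₀ N)) = (x.1.1, Finsupp.mapDomain (Sf a b h) x.1.2) :=
  rfl

theorem psiMap_id (hid : ∀ (a : Omega1) (x : S a), Sf a a le_rfl x = x) (a : Omega1) :
    psiMap f S Sf a a le_rfl = LinearMap.id := by
  apply LinearMap.ext
  intro x
  have : Sf a a le_rfl = id := funext (hid a)
  apply Subtype.ext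
  rw [psiMap_coe, this, Finsupp.mapDomain_id]
  rfl

theorem psiMap_comp
    (hcomp : ∀ (a b c : Omega1) (hab : a ≤ b) (hbc : b ≤ c) (x : S c),
      Sf a b hab (Sf b c hbc x) = Sf a c (hab.trans hbc) x)
    (a b c : Omega1) (hab : a ≤ b) (hbc : b ≤ c) :
    (psiMap f S Sf a b hab).comp (psiMap f S Sf b c hbc) = psiMap f S Sf a c (hab.trans hbc) := by
  apply LinearMap.ext
  intro x
  apply Subtype.ext
  rw [LinearMap.comp_apply, psiMap_coe, psiMap_coe, psiMap_coe]
  have : Sf a c (hab.trans hbc) = (Sf a b hab) ∘ (Sf b c hbc) :=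
    funext fun t => (hcomp a b c hab hbc t).symm
  rw [this, Finsupp.mapDomain_comp]

theorem psiMap_surj (hsurj : ∀ (a b : Omega1) (h : a ≤ b), Function.Surjective (Sf a b h))
    (a b : Omega1) (h : a ≤ b) : Function.Surjective (psiMap f S Sf a b h) := by
  rintro ⟨⟨m, n⟩, hmem⟩
  have hsec : ∀ s : S a, Sf a b h (Classical.choose (hsurj a b h s)) = s :=
    fun s => Classical.choose_spec (hsurj a b h s)
  set sec : S a → S b := fun s => Classical.choose (hsurj a b h s) with hsecdef
  have hcompsec : (Sf a b h) ∘ sec = id := funext hsec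
  have hmd : Finsupp.mapDomain (Sf a b h) (Finsupp.mapDomain sec n) = n := by
    rw [← Finsupp.mapDomain_comp, hcompsec, Finsupp.mapDomain_id]
  refine ⟨⟨(m, Finsupp.mapDomain sec n), ?_⟩, ?_⟩
  · rw [mem_QSub]
    rw [mem_QSub] at hmem
    dsimp only
    rw [sumVal_mapDomain]
    exact hmem
  · apply Subtype.ext
    rw [psiMap_coe]
    exact Prod.ext rfl hmd

end System

section KerEquiv

variable {R : Type} [Ring R] {M N A : Type} [AddCommGroup M] [Module R M]
  [AddCommGroup N] [Module R N] [AddCommGroup A] [Module R A]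

noncomputable def kerEquivInvLim
    (f : M →ₗ[R] N) (g : A →ₗ[R] M)
    (hg : Function.Injective g) (hexact : LinearMap.range g = LinearMap.ker f)
    (S : Omega1 → Type) (Sf : ∀ a b : Omega1, a ≤ b → S b → S a)
    (hid : ∀ (a : Omega1) (x : S a), Sf a a le_rfl x = x)
    (hcomp : ∀ (a b c : Omega1) (hab : a ≤ b) (hbc : b ≤ c) (x : S c),
      Sf a b hab (Sf b c hbc x) = Sf a c (hab.trans hbc) x)
    (hempty : IsEmpty {x : ∀ a, S a // ∀ (a b : Omega1) (h : a ≤ b), Sf a b h (x b) = x a}) :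
    A ≃ₗ[R] ↥(invLim (fun a => ↥(QSub f (S a))) (psiMap f S Sf)) := by
  have hker : ∀ v : A, f (g v) = 0 := fun v =>
    LinearMap.mem_ker.mp (hexact ▸ LinearMap.mem_range_self g v)
  have hLamem : ∀ (a : Omega1) (v : A), (g.prod (0 : A →ₗ[R] S a →₀ N)) v ∈ QSub f (S a) := by
    intro a v
    rw [mem_QSub]
    show f (g v) = sumVal (R := R) (S a) 0
    rw [map_zero]
    exact hker v
  set La : ∀ a : Omega1, A →ₗ[R] ↥(QSub f (S a)) :=
    fun a => LinearMap.codRestrict (QSub f (S a)) (g.prod 0) (hLamem a) with hLa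
  have hLaval : ∀ (a : Omega1) (v : A), ((La a v : M × (S a →₀ N))) = (g v, 0) := fun a v => rfl
  have hpimem : ∀ v : A, (LinearMap.pi La) v ∈ invLim (fun a => ↥(QSub f (S a))) (psiMap f S Sf) := by
    intro v i j h
    apply Subtype.ext
    rw [psiMap_coe]
    show ((g v, Finsupp.mapDomain (Sf i j h) (0 : S j →₀ N)) : M × (S i →₀ N))
      = ((g v, (0 : S i →₀ N)) : M × (S i →₀ N))
    rw [Finsupp.mapDomain_zero]
  refine LinearEquiv.ofBijective
    (LinearMap.codRestrict _ (LinearMap.pi La) hpimem) ⟨?_, ?_⟩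
  · intro v w hvw
    have h0 := congrArg Subtype.val hvw
    have h1 := congrArg (fun z : ∀ a, ↥(QSub f (S a)) =>
      ((z (Classical.arbitrary Omega1) : M × (S (Classical.arbitrary Omega1) →₀ N)).1)) h0
    exact hg h1
  · rintro ⟨x, hx⟩
    set mf : Omega1 → M := fun a => ((x a : M × (S a →₀ N))).1 with hmf
    set nf : ∀ a : Omega1, S a →₀ N := fun a => ((x a : M × (S a →₀ N))).2 with hnf
    have hcpt : ∀ (i j : Omega1) (h : i ≤ j),
        mf j = mf i ∧ Finsupp.mapDomain (Sf i j h) (nf j) = nf i := by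
      intro i j h
      have := congrArg (Subtype.val) (hx i j h)
      rw [psiMap_coe] at this
      exact ⟨congrArg Prod.fst this, congrArg Prod.snd this⟩
    have hnzero : ∀ a, nf a = 0 :=
      compat_vanish S Sf hid hcomp hempty nf (fun i j h => (hcpt i j h).2)
    set a1 : Omega1 := Classical.arbitrary Omega1 with ha1
    have hmconst : ∀ a, mf a = mf a1 := by
      intro a
      rcases le_total a a1 with h | h
      · exact ((hcpt a a1 h).1).symm
      · exact (hcpt a1 a h).1
    have hfm : f (mf a1) = 0 := by
      have hQ := (mem_QSub f (x a1 : M × (S a1 →₀ N))).mp (x a1).2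
      show f ((x a1 : M × (S a1 →₀ N))).1 = 0
      rw [hQ, show ((x a1 : M × (S a1 →₀ N))).2 = 0 from hnzero a1, map_zero]
    obtain ⟨v, hv⟩ : mf a1 ∈ LinearMap.range g := by
      rw [hexact, LinearMap.mem_ker]
      exact hfm
    refine ⟨v, ?_⟩
    apply Subtype.ext
    funext a
    apply Subtype.ext
    show ((La a v : M × (S a →₀ N))) = (x a : M × (S a →₀ N))
    rw [hLaval]
    refine Prod.ext ?_ ?_
    · show g v = mf a
      rw [hv, hmconst a]
    · show (0 : S a →₀ N) = nf a
      rw [hnzero]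

end KerEquiv

/-- Corollary (b): if `𝓜` is a class of left `R`-modules closed under arbitrary direct
sums, and `0 → A → M → N` is exact with `M, N ∈ 𝓜`, then (given an `ω₁`-indexed inverse
system of nonempty sets with surjective maps and empty limit) `A` is the inverse limit of
an `ω₁`-indexed system of modules in `𝓜` with surjective transition maps. -/
theorem ker_eq_invLim_surjective (R : Type) [Ring R] (𝓜 : ModuleCat.{0} R → Prop)
    (hsum : ∀ (ι : Type) (G : ι → ModuleCat.{0} R), (∀ i, 𝓜 (G i)) →
      ∃ P : ModuleCat.{0} R, 𝓜 P ∧ Nonempty ((Π₀ i, ↥(G i)) ≃ₗ[R] ↥P))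
    (A : Type) [AddCommGroup A] [Module R A]
    (M N : ModuleCat.{0} R) (hM : 𝓜 M) (hN : 𝓜 N)
    (f : M →ₗ[R] N) (g : A →ₗ[R] M)
    (hg : Function.Injective g) (hexact : LinearMap.range g = LinearMap.ker f)
    (S : Omega1 → Type) (Sf : ∀ a b : Omega1, a ≤ b → S b → S a)
    (hne : ∀ a, Nonempty (S a))
    (hid : ∀ (a : Omega1) (x : S a), Sf a a le_rfl x = x)
    (hcomp : ∀ (a b c : Omega1) (hab : a ≤ b) (hbc : b ≤ c) (x : S c),
      Sf a b hab (Sf b c hbc x) = Sf a c (hab.trans hbc) x)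
    (hsurj : ∀ (a b : Omega1) (h : a ≤ b), Function.Surjective (Sf a b h))
    (hempty : IsEmpty {x : ∀ a, S a // ∀ (a b : Omega1) (h : a ≤ b), Sf a b h (x b) = x a}) :
    ∃ (P : Omega1 → ModuleCat.{0} R)
      (φ : ∀ a b : Omega1, a ≤ b → (↥(P b) →ₗ[R] ↥(P a))),
      (∀ a, φ a a le_rfl = LinearMap.id) ∧
      (∀ (a b c : Omega1) (hab : a ≤ b) (hbc : b ≤ c),
        (φ a b hab).comp (φ b c hbc) = φ a c (hab.trans hbc)) ∧
      (∀ a, 𝓜 (P a)) ∧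
      (∀ (a b : Omega1) (h : a ≤ b), Function.Surjective (φ a b h)) ∧
      Nonempty (A ≃ₗ[R] ↥(invLim (fun a => ↥(P a)) φ)) := by
  classical
  set pt : ∀ a, S a := fun a => Classical.choice (hne a) with hpt
  set T : Omega1 → Type := fun a => {s : S a // s ≠ pt a} with hT
  set G : ∀ a, Option (T a) → ModuleCat.{0} R := fun a o => o.elim M (fun _ => N) with hG
  have hGM : ∀ a i, 𝓜 (G a i) := by rintro a (_ | t); exacts [hM, hN]
  choose P hPM hPe using fun a => hsum (Option (T a)) (G a) (hGM a)
  let eQ : ∀ a, ↥(QSub f (S a)) ≃ₗ[R] ↥(P a) := fun a =>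
    (((splitEquiv f (S a) (pt a)).trans
      ((LinearEquiv.refl R ↥M).prodCongr (finsuppLequivDFinsupp R))).trans
      (optionDFinsuppLEquiv (fun i => ↥(G a i))).symm).trans (Classical.choice (hPe a))
  refine ⟨P, fun a b h =>
    ((eQ a).toLinearMap.comp (psiMap f S Sf a b h)).comp (eQ b).symm.toLinearMap,
    ?_, ?_, hPM, ?_, ?_⟩
  · intro a
    apply LinearMap.ext
    intro x
    simp only [LinearMap.comp_apply, LinearEquiv.coe_coe, psiMap_id f S Sf hid a,
      LinearMap.id_apply]
    simp
  · intro a b c hab hbc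
    apply LinearMap.ext
    intro x
    simp only [LinearMap.comp_apply, LinearEquiv.coe_coe, LinearEquiv.symm_apply_apply]
    exact congrArg (eQ a) (LinearMap.congr_fun (psiMap_comp f S Sf hcomp a b c hab hbc)
      ((eQ c).symm x))
  · intro a b h
    simp only [LinearMap.coe_comp, LinearEquiv.coe_coe]
    exact (eQ a).surjective.comp ((psiMap_surj f S Sf hsurj a b h).comp (eQ b).symm.surjective)
  · exact ⟨(kerEquivInvLim f g hg hexact S Sf hid hcomp hempty).trans
      (invLimCongr (psiMap f S Sf) eQ)⟩
end

section
/- Let $R$ be a ring, $\mathbf{M}$ a class of left $R$-modules, $\kappa$ an infinite regular cardinal such that $\mathbf{M}$ is closed under $\kappa$-restricted direct products, and $0 \to A \to M \xrightarrow{f} N$ an exact sequence with $M, N \in \mathbf{M}$. Then $A$ is the inverse limit (intersection) of a downward directed family of modules in $\mathbf{M}$ with one-to-one transition maps. -/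
universe u

open Cardinal

namespace KerTest
variable {R : Type u} [Ring R] {I : Type u} (M N : ModuleCat.{u} R)

/-- family: `M` at `none`, `N` at `some i`. -/
def Gfam : Option I → ModuleCat.{u} R := fun j =>
  Option.rec (motive := fun _ => ModuleCat.{u} R) M (fun _ => N) j

def mk' (a : ↥M) (b : I → ↥N) : ∀ j : Option I, ↥(Gfam (I := I) M N j) :=
  fun j => Option.rec (motive := fun j => ↥(Gfam (I := I) M N j)) a b j

@[simp] lemma mk'_none (a : ↥M) (b : I → ↥N) : mk' M N a b none = a := rfl
@[simp] lemma mk'_some (a : ↥M) (b : I → ↥N) (i : I) : mk' M N a b (some i) = b i := rfl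

lemma mk'_eta (x : ∀ j : Option I, ↥(Gfam (I := I) M N j)) :
    mk' M N (x none) (fun i => x (some i)) = x := by
  funext j; cases j <;> rfl

end KerTest

namespace KerTest2
open KerTest
open scoped Classical
variable {R : Type u} [Ring R] {I : Type u} (M N : ModuleCat.{u} R)

lemma card_support_mk' (κ : Cardinal.{u}) (hκ : ℵ₀ ≤ κ) (a : ↥M) (b : I → ↥N) (hb : #{i | b i ≠ 0} < κ) :
    #{j | mk' M N a b j ≠ 0} < κ := by
  have hsub : {j | mk' M N a b j ≠ 0} ⊆ {none} ∪ some '' {i | b i ≠ 0} := by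
    rintro (_ | i) hj
    · exact Or.inl rfl
    · exact Or.inr ⟨i, hj, rfl⟩
  refine lt_of_le_of_lt (Cardinal.mk_le_mk_of_subset hsub) ?_
  refine lt_of_le_of_lt (Cardinal.mk_union_le _ _) (Cardinal.add_lt_of_lt hκ ?_ ?_)
  · simpa using (Cardinal.one_lt_aleph0.trans_le hκ)
  · exact lt_of_le_of_lt (Cardinal.mk_image_le) hb

def RP (κ : Cardinal.{u}) (hκ : ℵ₀ ≤ κ) : Submodule R (∀ j : Option I, ↥(Gfam (I := I) M N j)) :=
  restrictedProd R (fun j => ↥(Gfam (I := I) M N j)) κ hκ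

def mkRP (κ : Cardinal.{u}) (hκ : ℵ₀ ≤ κ) (a : ↥M) (b : I → ↥N) (hb : #{i | b i ≠ 0} < κ) : ↥(RP (I := I) M N κ hκ) :=
  ⟨mk' M N a b, card_support_mk' M N κ hκ a b hb⟩

lemma card_support_some (κ : Cardinal.{u}) (hκ : ℵ₀ ≤ κ) (x : ↥(RP (I := I) M N κ hκ)) :
    #{i | x.1 (some i) ≠ 0} < κ := by
  refine lt_of_le_of_lt (Cardinal.mk_le_of_injective
    (f := fun p : {i | x.1 (some i) ≠ 0} => (⟨some p.1, p.2⟩ : {j | x.1 j ≠ 0})) ?_) x.2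
  rintro ⟨i, hi⟩ ⟨i', hi'⟩ h
  simpa using congrArg Subtype.val h

variable (f : ↥M →ₗ[R] ↥N) (κ : Cardinal.{u}) (hκ : ℵ₀ ≤ κ)

/-- The submodule of the restricted product where the coordinates indexed by `X`
all equal `f` of the `none`-coordinate. -/
def SX (X : Set I) : Submodule R ↥(RP (I := I) M N κ hκ) where
  carrier := {x | ∀ i ∈ X, x.1 (some i) = f (x.1 none)}
  zero_mem' := by intro i _; exact (map_zero f).symm
  add_mem' := by intro x y hx hy i hi; simp [hx i hi, hy i hi]; exact (map_add f _ _).symm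
  smul_mem' := by intro c x hx i hi; simp [hx i hi]; exact (map_smul f _ _).symm

lemma card_support_reindex (x : ↥(RP (I := I) M N κ hκ)) (e : I → I)
    (he : Function.Injective e) : #{i | x.1 (some (e i)) ≠ 0} < κ := by
  refine lt_of_le_of_lt (Cardinal.mk_le_of_injective
    (f := fun p : {i | x.1 (some (e i)) ≠ 0} => (⟨e p.1, p.2⟩ : {i | x.1 (some i) ≠ 0})) ?_)
    (card_support_some M N κ hκ x)
  rintro ⟨i, hi⟩ ⟨i', hi'⟩ h
  exact Subtype.ext (he (congrArg Subtype.val h))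

lemma card_support_dite (X : Set I) (hX : #X < κ)
    (y : ↥(RP (I := I) M N κ hκ)) (a : ↥N) (ε : I ≃ ↥(Xᶜ)) :
    #{i | (if h : i ∈ X then a else y.1 (some (ε.symm ⟨i, h⟩))) ≠ 0} < κ := by
  have hsub : {i | (if h : i ∈ X then a else y.1 (some (ε.symm ⟨i, h⟩))) ≠ 0}
      ⊆ X ∪ (fun i' : I => ((ε i' : I))) '' {i' | y.1 (some i') ≠ 0} := by
    intro i hi
    by_cases h : i ∈ X
    · exact Or.inl h
    · refine Or.inr ⟨(ε.symm ⟨i, h⟩ : I), ?_, ?_⟩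
      · intro h0; exact hi ((dif_neg h).trans h0)
      · simp
  refine lt_of_le_of_lt (Cardinal.mk_le_mk_of_subset hsub) ?_
  refine lt_of_le_of_lt (Cardinal.mk_union_le _ _) (Cardinal.add_lt_of_lt hκ hX ?_)
  exact lt_of_le_of_lt Cardinal.mk_image_le (card_support_some M N κ hκ y)

@[simp] lemma mkRP_coe (κ : Cardinal.{u}) (hκ : ℵ₀ ≤ κ) (a : ↥M) (b : I → ↥N)
    (hb : #{i | b i ≠ 0} < κ) : (mkRP (I := I) M N κ hκ a b hb).1 = mk' M N a b := rfl

/-- Each `SX X` is isomorphic to the whole restricted product. -/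
noncomputable def equivSX (X : Set I) (hX : #X < κ) (ε : I ≃ ↥(Xᶜ)) :
    ↥(SX M N f κ hκ X) ≃ₗ[R] ↥(RP (I := I) M N κ hκ) where
  toFun x := mkRP M N κ hκ (x.1.1 none) (fun i => x.1.1 (some ((ε i : I))))
    (card_support_reindex M N κ hκ x.1 (fun i => (ε i : I))
      (fun a b h => ε.injective (Subtype.ext h)))
  map_add' x y := Subtype.ext (funext fun j => by cases j <;> rfl)
  map_smul' c x := Subtype.ext (funext fun j => by cases j <;> rfl)
  invFun y := ⟨mkRP M N κ hκ (y.1 none)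
      (fun i => if h : i ∈ X then f (y.1 none) else y.1 (some (ε.symm ⟨i, h⟩)))
      (card_support_dite M N κ hκ X hX y (f (y.1 none)) ε),
    fun i hi => by
      show (if h : i ∈ X then f (y.1 none) else y.1 (some (ε.symm ⟨i, h⟩))) = f (y.1 none)
      exact dif_pos hi⟩
  left_inv x := by
    refine Subtype.ext (Subtype.ext (funext fun j => ?_))
    cases j with
    | none => rfl
    | some i =>
      by_cases h : i ∈ X
      · exact (dif_pos h).trans (x.2 i h).symm
      · show (if h : i ∈ X then f (x.1.1 none)
            else x.1.1 (some ((ε (ε.symm ⟨i, h⟩) : ↥(Xᶜ)) : I))) = x.1.1 (some i)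
        refine (dif_neg h).trans ?_
        rw [Equiv.apply_symm_apply]
  right_inv y := by
    refine Subtype.ext (funext fun j => ?_)
    cases j with
    | none => rfl
    | some i =>
      show (if h : ((ε i : I)) ∈ X then f (y.1 none) else y.1 (some (ε.symm ⟨(ε i : I), h⟩)))
          = y.1 (some i)
      refine (dif_neg (ε i).2).trans ?_
      rw [Subtype.coe_eta, Equiv.symm_apply_apply]

lemma exists_equiv_compl {κ : Cardinal.{u}} (hκ : ℵ₀ ≤ κ) (hI : #I = κ)
    (X : Set I) (hX : #X < κ) : Nonempty (I ≃ ↥(Xᶜ)) := by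
  have h1 : #(↥(Xᶜ)) ≤ κ := hI ▸ Cardinal.mk_set_le Xᶜ
  have h2 : ¬ #(↥(Xᶜ)) < κ := by
    intro h
    have hsum := Cardinal.mk_sum_compl X
    rw [hI] at hsum
    have hlt : #X + #(↥(Xᶜ)) < κ := Cardinal.add_lt_of_lt hκ hX h
    rw [hsum] at hlt
    exact lt_irrefl κ hlt
  have : #(↥(Xᶜ)) = #I := by rw [hI]; exact le_antisymm h1 (not_lt.mp h2)
  exact ⟨(Cardinal.eq.mp this).some.symm⟩

end KerTest2

open KerTest KerTest2 in
/-- Corollary (a): if `𝓜` is a class of left `R`-modules closed under `κ`-restricted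
direct products (`κ` an infinite regular cardinal), and `0 → A → M → N` is exact with
`M, N ∈ 𝓜`, then `A` is the intersection (inverse limit) of a downward directed family
of submodules, each isomorphic to a member of `𝓜`, with one-to-one transition maps. -/
theorem ker_eq_directed_inter (R : Type u) [Ring R] (κ : Cardinal.{u})
    (hreg : κ.IsRegular) (𝓜 : ModuleCat.{u} R → Prop)
    (hprod : ∀ (I : Type u) (G : I → ModuleCat.{u} R), (∀ i, 𝓜 (G i)) →
      ∃ P : ModuleCat.{u} R, 𝓜 P ∧
        Nonempty (↥(restrictedProd R (fun i => ↥(G i)) κ hreg.aleph0_le) ≃ₗ[R] ↥P))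
    (A : Type u) [AddCommGroup A] [Module R A]
    (M N : ModuleCat.{u} R) (hM : 𝓜 M) (hN : 𝓜 N)
    (f : M →ₗ[R] N) (g : A →ₗ[R] M)
    (hg : Function.Injective g) (hexact : LinearMap.range g = LinearMap.ker f) :
    ∃ (P : ModuleCat.{u} R) (ι : Type u) (S : ι → Submodule R P),
      Nonempty ι ∧
      (∀ i j : ι, ∃ k : ι, S k ≤ S i ⊓ S j) ∧
      (∀ i, ∃ Q : ModuleCat.{u} R, 𝓜 Q ∧ Nonempty (↥(S i) ≃ₗ[R] ↥Q)) ∧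
      Nonempty (A ≃ₗ[R] ↥(⨅ i, S i)) := by
  classical
  obtain ⟨I, hI⟩ : ∃ I : Type u, #I = κ := ⟨κ.out, Cardinal.mk_out κ⟩
  have hκ : ℵ₀ ≤ κ := hreg.aleph0_le
  obtain ⟨Q, hQ, ⟨eQ⟩⟩ := hprod (Option I) (Gfam (I := I) M N)
    (by rintro (_ | i) <;> [exact hM; exact hN])
  have hzero : (0 : Cardinal.{u}) < κ := lt_of_lt_of_le (by exact_mod_cast aleph0_pos) hκ
  have hone : (1 : Cardinal.{u}) < κ := Cardinal.one_lt_aleph0.trans_le hκ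
  refine ⟨ModuleCat.of R ↥(RP (I := I) M N κ hκ), {X : Set I // #X < κ},
    fun X => SX M N f κ hκ X.1, ⟨⟨∅, by simpa using hzero⟩⟩, ?_, ?_, ?_⟩
  · -- directedness
    intro X Y
    refine ⟨⟨X.1 ∪ Y.1, ?_⟩, ?_⟩
    · exact lt_of_le_of_lt (Cardinal.mk_union_le _ _) (Cardinal.add_lt_of_lt hκ X.2 Y.2)
    · exact le_inf (fun x hx i hi => hx i (Or.inl hi)) (fun x hx i hi => hx i (Or.inr hi))
  · -- each member is isomorphic to a member of 𝓜
    intro X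
    obtain ⟨ε⟩ := exists_equiv_compl hκ hI X.1 X.2
    exact ⟨Q, hQ, ⟨(equivSX M N f κ hκ X.1 X.2 ε).trans eQ⟩⟩
  · -- A is the intersection
    have hfg : ∀ a : A, f (g a) = 0 := fun a =>
      LinearMap.mem_ker.mp (hexact ▸ LinearMap.mem_range_self g a)
    have hsupp0 : #{i : I | (0 : ↥N) ≠ 0} < κ := by simpa using hzero
    have hmem : ∀ a : A, mkRP (I := I) M N κ hκ (g a) (fun _ => 0) hsupp0 ∈
        ⨅ X : {X : Set I // #X < κ}, SX M N f κ hκ X.1 := by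
      intro a
      refine (Submodule.mem_iInf _).mpr ?_
      intro X i hi
      show (0 : ↥N) = f (g a)
      rw [hfg a]
    refine ⟨LinearEquiv.ofBijective
      { toFun := fun a => ⟨mkRP M N κ hκ (g a) (fun _ => 0) hsupp0, hmem a⟩
        map_add' := fun a a' => Subtype.ext (Subtype.ext (funext fun j => by
          cases j with
          | none => exact map_add g a a'
          | some i => exact (add_zero 0).symm))
        map_smul' := fun c a => Subtype.ext (Subtype.ext (funext fun j => by
          cases j with
          | none => exact map_smul g c a
          | some i => exact (smul_zero c : c • (0 : ↥N) = 0).symm)) } ⟨?_, ?_⟩⟩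
    · -- injective
      intro a a' h
      exact hg (congrFun (congrArg (fun z => z.1.1) h) none)
    · -- surjective
      intro x
      have hx : ∀ X : {X : Set I // #X < κ}, x.1 ∈ SX M N f κ hκ X.1 :=
        fun X => (Submodule.mem_iInf _).mp x.2 X
      have hsing : ∀ i : I, x.1.1 (some i) = f (x.1.1 none) := fun i =>
        hx ⟨{i}, by simpa using hone⟩ i rfl
      have hf0 : f (x.1.1 none) = 0 := by
        by_contra hne
        have hsub : Set.range (some : I → Option I) ⊆ {j | x.1.1 j ≠ 0} := by
          rintro _ ⟨i, rfl⟩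
          show x.1.1 (some i) ≠ 0
          rw [hsing i]; exact hne
        have hge : κ ≤ #{j | x.1.1 j ≠ 0} := by
          calc κ = #I := hI.symm
          _ = #(Set.range (some : I → Option I)) :=
            (Cardinal.mk_range_eq _ (Option.some_injective I)).symm
          _ ≤ #{j | x.1.1 j ≠ 0} := Cardinal.mk_le_mk_of_subset hsub
        exact absurd x.1.2 (not_lt.mpr hge)
      obtain ⟨a, ha⟩ : x.1.1 none ∈ LinearMap.range g := by
        rw [hexact]; exact (LinearMap.mem_ker (f := f) (y := (x.1.1 none : ↥M))).mpr hf0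
      refine ⟨a, Subtype.ext (Subtype.ext (funext fun j => ?_))⟩
      cases j with
      | none => exact ha
      | some i =>
        show (0 : ↥N) = x.1.1 (some i)
        rw [hsing i, hf0]
end
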